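/- arXiv:1109.3928 — 4 statements merged into one kernel-verified Lean document; each statement's English description precedes it below -/
import Mathlib

section
/- For all n ≥ 3 and m ≥ 3, the paired domination number satisfies γ_p(C_n × C_m) ≤ γ_p(C_{n+1} × C_m). -/
open SimpleGraph

/-- The toroidal mesh `C_n × C_m`: Cartesian product of two cycles, with
vertex set `ZMod n × ZMod m`. -/
def torusGraph (n m : ℕ) : SimpleGraph (ZMod n × ZMod m) where
  Adj a b := a ≠ b ∧ ((a.1 = b.1 ∧ (a.2 = b.2 + 1 ∨ b.2 = a.2 + 1)) ∨
    (a.2 = b.2 ∧ (a.1 = b.1 + 1 ∨ b.1 = a.1 + 1)))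
  symm := by
    constructor
    intro a b h
    obtain ⟨hne, h⟩ := h
    refine ⟨hne.symm, ?_⟩
    rcases h with ⟨h1, h2⟩ | ⟨h1, h2⟩
    · exact Or.inl ⟨h1.symm, h2.symm⟩
    · exact Or.inr ⟨h1.symm, h2.symm⟩
  loopless := by constructor; intro a h; exact h.1 rfl

/-- `D` is a total dominating set of `G`: every vertex has a neighbor in `D`. -/
def IsTotalDomSet {V : Type*} (G : SimpleGraph V) (D : Set V) : Prop :=
  ∀ v : V, ∃ u ∈ D, G.Adj v u

/-- `D` is a dominating set of `G`: every vertex outside `D` has a neighbor in `D`. -/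
def IsDomSet {V : Type*} (G : SimpleGraph V) (D : Set V) : Prop :=
  ∀ v : V, v ∉ D → ∃ u ∈ D, G.Adj v u

/-- `D` is a paired dominating set: a dominating set whose induced subgraph
has a perfect matching. -/
def IsPairedDomSet {V : Type*} (G : SimpleGraph V) (D : Set V) : Prop :=
  IsDomSet G D ∧ ∃ M : (G.induce D).Subgraph, M.IsPerfectMatching

/-- The total domination number. -/
noncomputable def totalDomNum {V : Type*} (G : SimpleGraph V) : ℕ :=
  sInf {k | ∃ D : Set V, IsTotalDomSet G D ∧ D.ncard = k}

/-- The paired domination number. -/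
noncomputable def pairedDomNum {V : Type*} (G : SimpleGraph V) : ℕ :=
  sInf {k | ∃ D : Set V, IsPairedDomSet G D ∧ D.ncard = k}

/-- The domination number. -/
noncomputable def domNum {V : Type*} (G : SimpleGraph V) : ℕ :=
  sInf {k | ∃ D : Set V, IsDomSet G D ∧ D.ncard = k}

section AuxMatch
variable {V : Type*} [DecidableEq V] {G : SimpleGraph V}

/-- `p` is a matching of `G` covering exactly `C`. -/
def MatchOn (G : SimpleGraph V) (C : Finset V) (p : V → V) : Prop :=
  ∀ v ∈ C, p v ∈ C ∧ p (p v) = v ∧ G.Adj v (p v)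

lemma matchOn_pair {C : Finset V} {p : V → V} (h : MatchOn G C p) {u z : V}
    (hu : u ∉ C) (hz : z ∉ C) (hadj : G.Adj u z) :
    MatchOn G (insert u (insert z C)) (fun v => if v = u then z else if v = z then u else p v) := by
  intro v hv
  dsimp only
  have hzu : z ≠ u := (G.ne_of_adj hadj).symm
  simp only [Finset.mem_insert] at hv
  rcases hv with rfl | rfl | hv
  · rw [if_pos rfl, if_neg hzu, if_pos rfl]
    exact ⟨by simp, rfl, hadj⟩
  · rw [if_neg hzu, if_pos rfl, if_pos rfl]
    exact ⟨by simp, rfl, hadj.symm⟩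
  · have h1 : v ≠ u := fun h => hu (h ▸ hv)
    have h2 : v ≠ z := fun h => hz (h ▸ hv)
    rw [if_neg h1, if_neg h2]
    obtain ⟨hp1, hp2, hp3⟩ := h v hv
    have h3 : p v ≠ u := fun h => hu (h ▸ hp1)
    have h4 : p v ≠ z := fun h => hz (h ▸ hp1)
    rw [if_neg h3, if_neg h4, hp2]
    exact ⟨by simp [hp1], rfl, hp3⟩

/-- Walk lemma: one hole can be filled, adding at most one new covered vertex. -/
lemma walk_lemma (v₀ : V) (ψ : V → V)
    (hψ : ∀ v, v ≠ v₀ → G.Adj v (ψ v) ∧ ψ (ψ v) = v) :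
    ∀ (N : ℕ) (C : Finset V) (p : V → V) (u : V), C.card ≤ N →
    MatchOn G C p → u ∉ C → v₀ ∉ C → u ≠ v₀ →
    ∃ (z : V) (q : V → V), z ∉ C ∧ z ≠ u ∧ (∃ y, (y ∈ C ∨ y = u) ∧ z = ψ y) ∧
      MatchOn G (insert u (insert z C)) q := by
  intro N
  induction N with
  | zero =>
    intro C p u hcard hM hu hv0 huv0
    have hC : C = ∅ := Finset.card_eq_zero.mp (Nat.le_zero.mp hcard)
    subst hC
    obtain ⟨hadj, _⟩ := hψ u huv0
    exact ⟨ψ u, _, by simp, (G.ne_of_adj hadj).symm, ⟨u, Or.inr rfl, rfl⟩,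
      matchOn_pair hM (by simp) (by simp) hadj⟩
  | succ N ih =>
    intro C p u hcard hM hu hv0 huv0
    obtain ⟨hadj, hinv⟩ := hψ u huv0
    by_cases hx₁C : ψ u ∈ C
    swap
    · exact ⟨ψ u, _, hx₁C, (G.ne_of_adj hadj).symm, ⟨u, Or.inr rfl, rfl⟩,
        matchOn_pair hM hu hx₁C hadj⟩
    obtain ⟨hx₂C, hx₂inv, hx₂adj⟩ := hM (ψ u) hx₁C
    have hx12 : ψ u ≠ p (ψ u) := G.ne_of_adj hx₂adj
    have hmemC₂ : ∀ v, v ∈ (C.erase (ψ u)).erase (p (ψ u)) ↔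
        v ∈ C ∧ v ≠ ψ u ∧ v ≠ p (ψ u) := by
      intro v; simp only [Finset.mem_erase]; tauto
    have hC₂sub : (C.erase (ψ u)).erase (p (ψ u)) ⊆ C :=
      (Finset.erase_subset _ _).trans (Finset.erase_subset _ _)
    have hM₂ : MatchOn G ((C.erase (ψ u)).erase (p (ψ u))) p := by
      intro v hv
      rw [hmemC₂] at hv
      obtain ⟨hvC, hv1, hv2⟩ := hv
      obtain ⟨h1, h2, h3⟩ := hM v hvC
      refine ⟨?_, h2, h3⟩
      rw [hmemC₂]
      refine ⟨h1, fun h => hv2 ?_, fun h => hv1 ?_⟩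
      · have h5 := congrArg p h
        rw [h2] at h5
        exact h5
      · have h5 := congrArg p h
        rw [h2, hx₂inv] at h5
        exact h5
    have hcard₂ : ((C.erase (ψ u)).erase (p (ψ u))).card ≤ N := by
      have h1 : ((C.erase (ψ u)).erase (p (ψ u))).card ≤ (C.erase (ψ u)).card :=
        Finset.card_erase_le
      have h2 : (C.erase (ψ u)).card < C.card := Finset.card_erase_lt_of_mem hx₁C
      omega
    have hx₂C₂ : p (ψ u) ∉ (C.erase (ψ u)).erase (p (ψ u)) := by rw [hmemC₂]; tauto
    have hv0C₂ : v₀ ∉ (C.erase (ψ u)).erase (p (ψ u)) := fun h => hv0 (hC₂sub h)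
    have hx₂v₀ : p (ψ u) ≠ v₀ := fun h => hv0 (h ▸ hx₂C)
    obtain ⟨z₂, q₂, hz₂C₂, hz₂x₂, ⟨y₂, hy₂mem, hy₂⟩, hM'⟩ :=
      ih _ p (p (ψ u)) hcard₂ hM₂ hx₂C₂ hv0C₂ hx₂v₀
    have hy₂C : y₂ ∈ C := by
      rcases hy₂mem with h | rfl
      · exact hC₂sub h
      · exact hx₂C
    have hy₂v₀ : y₂ ≠ v₀ := fun h => hv0 (h ▸ hy₂C)
    have hz₂u : z₂ ≠ u := by
      intro h
      have h1 : y₂ = ψ u := by rw [← (hψ y₂ hy₂v₀).2, ← hy₂, h]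
      rw [h1] at hy₂mem
      rcases hy₂mem with h' | h'
      · rw [hmemC₂] at h'; tauto
      · exact hx12 h'
    have hz₂x₁ : z₂ ≠ ψ u := by
      intro h
      have h1 : y₂ = u := by rw [← (hψ y₂ hy₂v₀).2, ← hy₂, h, hinv]
      rw [h1] at hy₂C; exact hu hy₂C
    have hz₂C : z₂ ∉ C := by
      intro h
      exact hz₂C₂ (by rw [hmemC₂]; exact ⟨h, hz₂x₁, hz₂x₂⟩)
    refine ⟨z₂, fun v => if v = u then ψ u else if v = ψ u then u else q₂ v,
      hz₂C, hz₂u, ⟨y₂, Or.inl hy₂C, hy₂⟩, ?_⟩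
    have hux₁ : u ≠ ψ u := G.ne_of_adj hadj
    have huIn : u ∉ insert (p (ψ u)) (insert z₂ ((C.erase (ψ u)).erase (p (ψ u)))) := by
      simp only [Finset.mem_insert]
      push_neg
      exact ⟨fun h => hu (h ▸ hx₂C), fun h => hz₂u h.symm, fun h => hu (hC₂sub h)⟩
    have hx₁In : ψ u ∉ insert (p (ψ u)) (insert z₂ ((C.erase (ψ u)).erase (p (ψ u)))) := by
      simp only [Finset.mem_insert]
      push_neg
      refine ⟨hx12, fun h => hz₂x₁ h.symm, ?_⟩
      rw [hmemC₂]; tauto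
    intro v hv
    dsimp only
    have hv' : v = u ∨ v ∈ insert (p (ψ u)) (insert z₂ ((C.erase (ψ u)).erase (p (ψ u)))) ∨
        v = ψ u := by
      simp only [Finset.mem_insert] at hv ⊢
      rcases hv with rfl | rfl | hv
      · tauto
      · tauto
      · by_cases h1 : v = ψ u; · tauto
        by_cases h2 : v = p (ψ u); · tauto
        right; left; right; right; rw [hmemC₂]; tauto
    have hsub : insert (p (ψ u)) (insert z₂ ((C.erase (ψ u)).erase (p (ψ u)))) ⊆
        insert u (insert z₂ C) := by
      intro w hw
      simp only [Finset.mem_insert] at hw ⊢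
      rcases hw with rfl | rfl | hw
      · exact Or.inr (Or.inr hx₂C)
      · exact Or.inr (Or.inl rfl)
      · exact Or.inr (Or.inr (hC₂sub hw))
    rcases hv' with rfl | hvmem | rfl
    · rw [if_pos rfl, if_neg hux₁.symm, if_pos rfl]
      exact ⟨by simp [hx₁C], rfl, hadj⟩
    · have h1 : v ≠ u := fun h => huIn (h ▸ hvmem)
      have h2 : v ≠ ψ u := fun h => hx₁In (h ▸ hvmem)
      rw [if_neg h1, if_neg h2]
      obtain ⟨hq1, hq2, hq3⟩ := hM' v hvmem
      have h3 : q₂ v ≠ u := fun h => huIn (h ▸ hq1)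
      have h4 : q₂ v ≠ ψ u := fun h => hx₁In (h ▸ hq1)
      rw [if_neg h3, if_neg h4, hq2]
      exact ⟨hsub hq1, rfl, hq3⟩
    · rw [if_neg hux₁.symm, if_pos rfl, if_pos rfl]
      exact ⟨by simp, rfl, hadj.symm⟩

/-- Transfer a partial matching through a ≤2-to-1 map `φ` that sends edges to
edges-or-points. -/
lemma contract_matching {α : Type*} [DecidableEq α] (φ : α → V) [DecidableEq V]
    {G : SimpleGraph V} :
    ∀ (N : ℕ) (A P : Finset α) (μ : α → α), A.card ≤ N → P ⊆ A →
    (∀ a ∈ P, μ a ∈ P ∧ μ a ≠ a ∧ μ (μ a) = a ∧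
      (φ (μ a) = φ a ∨ G.Adj (φ a) (φ (μ a)))) →
    (∀ b : V, (A.filter (fun a => φ a = b)).card ≤ 2) →
    ∃ (C : Finset V) (p : V → V), C ⊆ A.image φ ∧ MatchOn G C p ∧
      (A.image φ).card + ((A.image φ) \ C).card ≤ A.card + (A \ P).card := by
  classical
  intro N
  induction N with
  | zero =>
    intro A P μ hcard _ _ _
    have hA : A = ∅ := Finset.card_eq_zero.mp (Nat.le_zero.mp hcard)
    subst hA
    exact ⟨∅, id, by simp, fun v hv => absurd hv (Finset.notMem_empty v), by simp⟩
  | succ N ih =>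
    intro A P μ hcard hPA hμ hfib
    by_cases hinj : ∀ a1 ∈ A, ∀ a2 ∈ A, φ a1 = φ a2 → a1 = a2
    · -- φ injective on A : direct image
      refine ⟨P.image φ, fun b => if h : ∃ a, a ∈ P ∧ φ a = b then φ (μ h.choose) else b,
        Finset.image_subset_image hPA, ?_, ?_⟩
      · intro v hv
        dsimp only
        obtain ⟨a, haP, rfl⟩ := Finset.mem_image.mp hv
        have h1 : ∃ x, x ∈ P ∧ φ x = φ a := ⟨a, haP, rfl⟩
        rw [dif_pos h1]
        have h2 := h1.choose_spec
        have h3 : h1.choose = a := hinj _ (hPA h2.1) _ (hPA haP) h2.2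
        rw [h3]
        obtain ⟨hμ1, hμ2, hμ3, hμ4⟩ := hμ a haP
        have hne : φ (μ a) ≠ φ a := fun h => hμ2 (hinj _ (hPA hμ1) _ (hPA haP) h)
        have hAdj : G.Adj (φ a) (φ (μ a)) := hμ4.resolve_left hne
        refine ⟨Finset.mem_image_of_mem φ hμ1, ?_, hAdj⟩
        have h4 : ∃ x, x ∈ P ∧ φ x = φ (μ a) := ⟨μ a, hμ1, rfl⟩
        rw [dif_pos h4]
        have h5 := h4.choose_spec
        have h6 : h4.choose = μ a := hinj _ (hPA h5.1) _ (hPA hμ1) h5.2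
        rw [h6, hμ3]
      · have h1 : (A.image φ).card = A.card := Finset.card_image_of_injOn hinj
        have h2 : (A.image φ) \ (P.image φ) ⊆ (A \ P).image φ := by
          intro w hw
          obtain ⟨hw1, hw2⟩ := Finset.mem_sdiff.mp hw
          obtain ⟨a, haA, rfl⟩ := Finset.mem_image.mp hw1
          refine Finset.mem_image_of_mem φ (Finset.mem_sdiff.mpr ⟨haA, fun haP => ?_⟩)
          exact hw2 (Finset.mem_image_of_mem φ haP)
        have h3 := (Finset.card_le_card h2).trans Finset.card_image_le
        omega
    · push_neg at hinj
      obtain ⟨a1, ha1, a2, ha2, hfeq, hne⟩ := hinj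
      -- the fiber of φ a1 is exactly {a1, a2}
      have hfib_eq : A.filter (fun a => φ a = φ a1) = {a1, a2} := by
        have hsub2 : ({a1, a2} : Finset α) ⊆ A.filter (fun a => φ a = φ a1) := by
          intro x hx
          simp only [Finset.mem_insert, Finset.mem_singleton] at hx
          rcases hx with rfl | rfl
          · exact Finset.mem_filter.mpr ⟨ha1, rfl⟩
          · exact Finset.mem_filter.mpr ⟨ha2, hfeq.symm⟩
        exact (Finset.eq_of_subset_of_card_le hsub2
          (by rw [Finset.card_pair hne]; exact hfib _)).symm
      have hfiber : ∀ x ∈ A, φ x = φ a1 → x = a1 ∨ x = a2 := by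
        intro x hx hfx
        have : x ∈ A.filter (fun a => φ a = φ a1) := Finset.mem_filter.mpr ⟨hx, hfx⟩
        rw [hfib_eq] at this
        simpa using this
      have himage_sub : ∀ (A' : Finset α), A' ⊆ A →
          (∀ b, (A'.filter (fun a => φ a = b)).card ≤ 2) := by
        intro A' hsub b
        exact le_trans (Finset.card_le_card
          (Finset.filter_subset_filter _ hsub)) (hfib b)
      by_cases hP1 : a1 ∉ P ∨ a2 ∉ P
      · -- drop an unpaired element of the fat fiber
        obtain ⟨c, hcA, hcP, d, hdA, hcd⟩ : ∃ c, c ∈ A ∧ c ∉ P ∧ ∃ d, d ∈ A ∧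
            c ≠ d ∧ φ c = φ d := by
          rcases hP1 with h | h
          · exact ⟨a1, ha1, h, a2, ha2, hne, hfeq⟩
          · exact ⟨a2, ha2, h, a1, ha1, hne.symm, hfeq.symm⟩
        set A' := A.erase c with hA'
        have hPA' : P ⊆ A' := fun x hx =>
          Finset.mem_erase.mpr ⟨fun h => hcP (h ▸ hx), hPA hx⟩
        have hcard' : A'.card ≤ N := by
          have h1 : A'.card = A.card - 1 := by
            rw [hA']; exact Finset.card_erase_of_mem hcA
          have h2 : 1 ≤ A.card := Finset.card_pos.mpr ⟨c, hcA⟩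
          omega
        obtain ⟨C, p, hC1, hC2, hC3⟩ := ih A' P μ hcard' hPA' hμ
          (himage_sub A' (Finset.erase_subset _ _))
        have himg : A'.image φ = A.image φ := by
          apply Finset.Subset.antisymm (Finset.image_subset_image (Finset.erase_subset _ _))
          intro w hw
          obtain ⟨x, hxA, rfl⟩ := Finset.mem_image.mp hw
          by_cases hxc : x = c
          · subst hxc
            exact Finset.mem_image.mpr ⟨d, Finset.mem_erase.mpr
              ⟨fun h => hcd.1 h.symm, hdA⟩, hcd.2.symm⟩
          · exact Finset.mem_image.mpr ⟨x, Finset.mem_erase.mpr ⟨hxc, hxA⟩, rfl⟩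
        rw [himg] at hC1 hC3
        refine ⟨C, p, hC1, hC2, ?_⟩
        have h1 : A'.card = A.card - 1 := Finset.card_erase_of_mem hcA
        have h2 : A' \ P ⊆ A \ P := fun x hx => by
          obtain ⟨hx1, hx2⟩ := Finset.mem_sdiff.mp hx
          exact Finset.mem_sdiff.mpr ⟨(Finset.erase_subset _ _) hx1, hx2⟩
        have h3 := Finset.card_le_card h2
        have h4 : 1 ≤ A.card := Finset.card_pos.mpr ⟨c, hcA⟩
        omega
      · push_neg at hP1
        obtain ⟨hP1, hP2⟩ := hP1
        by_cases hpair : μ a1 = a2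
        · -- collapsed pair : drop both, image loses φ a1
          set A' := (A.erase a1).erase a2 with hA'
          set P' := (P.erase a1).erase a2 with hP'
          have hmemA' : ∀ x, x ∈ A' ↔ x ∈ A ∧ x ≠ a1 ∧ x ≠ a2 := by
            intro x; simp only [hA', Finset.mem_erase]; tauto
          have hmemP' : ∀ x, x ∈ P' ↔ x ∈ P ∧ x ≠ a1 ∧ x ≠ a2 := by
            intro x; simp only [hP', Finset.mem_erase]; tauto
          have hPA'' : P' ⊆ A' := by
            intro x hx
            rw [hmemP'] at hx
            rw [hmemA']
            exact ⟨hPA hx.1, hx.2⟩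
          have hμ1 := hμ a1 hP1
          have hμ' : ∀ a ∈ P', μ a ∈ P' ∧ μ a ≠ a ∧ μ (μ a) = a ∧
              (φ (μ a) = φ a ∨ G.Adj (φ a) (φ (μ a))) := by
            intro a ha
            rw [hmemP'] at ha
            obtain ⟨haP, hna1, hna2⟩ := ha
            obtain ⟨m1, m2, m3, m4⟩ := hμ a haP
            refine ⟨?_, m2, m3, m4⟩
            rw [hmemP']
            refine ⟨m1, fun h => hna2 ?_, fun h => hna1 ?_⟩
            · rw [← m3, h, hpair]
            · rw [← m3, h, ← hpair, hμ1.2.2.1]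
          have hcard' : A'.card ≤ N := by
            have h1 : A'.card ≤ (A.erase a1).card := Finset.card_erase_le
            have h2 := Finset.card_erase_of_mem ha1
            have h3 : 1 ≤ A.card := Finset.card_pos.mpr ⟨a1, ha1⟩
            omega
          obtain ⟨C, p, hC1, hC2, hC3⟩ := ih A' P' μ hcard' hPA'' hμ'
            (himage_sub A' ((Finset.erase_subset _ _).trans (Finset.erase_subset _ _)))
          have himg : A'.image φ = (A.image φ).erase (φ a1) := by
            ext w
            simp only [Finset.mem_image, Finset.mem_erase]
            constructor
            · rintro ⟨x, hx, rfl⟩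
              rw [hmemA'] at hx
              refine ⟨fun h => ?_, ⟨x, hx.1, rfl⟩⟩
              rcases hfiber x hx.1 h with rfl | rfl
              · exact hx.2.1 rfl
              · exact hx.2.2 rfl
            · rintro ⟨hw, x, hx, rfl⟩
              refine ⟨x, ?_, rfl⟩
              rw [hmemA']
              refine ⟨hx, fun h => hw (by rw [h]), fun h => hw (by rw [h, hfeq])⟩
          have hb_mem : φ a1 ∈ A.image φ := Finset.mem_image_of_mem φ ha1
          have hbC : φ a1 ∉ C := fun h => by
            have := hC1 h
            rw [himg] at this
            exact (Finset.mem_erase.mp this).1 rfl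
          refine ⟨C, p, hC1.trans (by rw [himg]; exact Finset.erase_subset _ _), hC2, ?_⟩
          -- cardinalities
          have e1 : (A.image φ).card = (A'.image φ).card + 1 := by
            rw [himg, Finset.card_erase_of_mem hb_mem]
            have : 1 ≤ (A.image φ).card := Finset.card_pos.mpr ⟨φ a1, hb_mem⟩
            omega
          have e2 : (A.image φ) \ C = insert (φ a1) ((A'.image φ) \ C) := by
            ext w
            simp only [Finset.mem_sdiff, Finset.mem_insert, himg, Finset.mem_erase]
            constructor
            · rintro ⟨hw1, hw2⟩
              by_cases h : w = φ a1
              · exact Or.inl h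
              · exact Or.inr ⟨⟨h, hw1⟩, hw2⟩
            · rintro (rfl | ⟨⟨_, hw1⟩, hw2⟩)
              · exact ⟨hb_mem, hbC⟩
              · exact ⟨hw1, hw2⟩
          have e3 : φ a1 ∉ (A'.image φ) \ C := by
            rw [himg]
            simp only [Finset.mem_sdiff, Finset.mem_erase]
            tauto
          have e4 : ((A.image φ) \ C).card = ((A'.image φ) \ C).card + 1 := by
            rw [e2, Finset.card_insert_of_notMem e3]
          have e5 : A' \ P' = A \ P := by
            ext x
            simp only [Finset.mem_sdiff, hmemA', hmemP']
            constructor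
            · rintro ⟨⟨h1, h2, h3⟩, h4⟩
              exact ⟨h1, fun hP => h4 ⟨hP, h2, h3⟩⟩
            · rintro ⟨h1, h2⟩
              have hx1 : x ≠ a1 := fun h => h2 (h ▸ hP1)
              have hx2 : x ≠ a2 := fun h => h2 (h ▸ hP2)
              exact ⟨⟨h1, hx1, hx2⟩, fun h => h2 h.1⟩
          have e6 : A'.card + 2 = A.card := by
            have h1 : a2 ∈ A.erase a1 := Finset.mem_erase.mpr ⟨fun h => hne h.symm, ha2⟩
            have h2 : A'.card = (A.erase a1).card - 1 := by
              rw [hA']; exact Finset.card_erase_of_mem h1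
            have h3 : (A.erase a1).card = A.card - 1 := Finset.card_erase_of_mem ha1
            have h4 : 1 ≤ A.card := Finset.card_pos.mpr ⟨a1, ha1⟩
            have h5 : 1 ≤ (A.erase a1).card := Finset.card_pos.mpr ⟨a2, h1⟩
            omega
          rw [e5] at hC3
          omega
        · -- a1 paired elsewhere : drop a1, unpair μ a1
          set A' := A.erase a1 with hA'
          set P' := (P.erase a1).erase (μ a1) with hP'
          have hμa1 := hμ a1 hP1
          have hmemP' : ∀ x, x ∈ P' ↔ x ∈ P ∧ x ≠ a1 ∧ x ≠ μ a1 := by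
            intro x; simp only [hP', Finset.mem_erase]; tauto
          have hPA'' : P' ⊆ A' := by
            intro x hx
            rw [hmemP'] at hx
            exact Finset.mem_erase.mpr ⟨hx.2.1, hPA hx.1⟩
          have hμ' : ∀ a ∈ P', μ a ∈ P' ∧ μ a ≠ a ∧ μ (μ a) = a ∧
              (φ (μ a) = φ a ∨ G.Adj (φ a) (φ (μ a))) := by
            intro a ha
            rw [hmemP'] at ha
            obtain ⟨haP, hna1, hnma1⟩ := ha
            obtain ⟨m1, m2, m3, m4⟩ := hμ a haP
            refine ⟨?_, m2, m3, m4⟩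
            rw [hmemP']
            refine ⟨m1, fun h => hnma1 ?_, fun h => hna1 ?_⟩
            · rw [← m3, h]
            · rw [← m3, h, hμa1.2.2.1]
          have hcard' : A'.card ≤ N := by
            have h1 : A'.card = A.card - 1 := by
              rw [hA']; exact Finset.card_erase_of_mem ha1
            have h2 : 1 ≤ A.card := Finset.card_pos.mpr ⟨a1, ha1⟩
            omega
          obtain ⟨C, p, hC1, hC2, hC3⟩ := ih A' P' μ hcard' hPA'' hμ'
            (himage_sub A' (Finset.erase_subset _ _))
          have himg : A'.image φ = A.image φ := by
            apply Finset.Subset.antisymm (Finset.image_subset_image (Finset.erase_subset _ _))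
            intro w hw
            obtain ⟨x, hxA, rfl⟩ := Finset.mem_image.mp hw
            by_cases hxc : x = a1
            · subst hxc
              exact Finset.mem_image.mpr ⟨a2, Finset.mem_erase.mpr
                ⟨fun h => hne h.symm, ha2⟩, hfeq.symm⟩
            · exact Finset.mem_image.mpr ⟨x, Finset.mem_erase.mpr ⟨hxc, hxA⟩, rfl⟩
          rw [himg] at hC1 hC3
          refine ⟨C, p, hC1, hC2, ?_⟩
          have e1 : A'.card = A.card - 1 := by
            rw [hA']; exact Finset.card_erase_of_mem ha1
          have e2 : A' \ P' ⊆ insert (μ a1) (A \ P) := by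
            intro x hx
            obtain ⟨hx1, hx2⟩ := Finset.mem_sdiff.mp hx
            rw [hmemP'] at hx2
            push_neg at hx2
            by_cases h : x = μ a1
            · exact Finset.mem_insert.mpr (Or.inl h)
            · refine Finset.mem_insert.mpr (Or.inr (Finset.mem_sdiff.mpr
                ⟨(Finset.erase_subset _ _) hx1, fun hxP => ?_⟩))
              exact h (hx2 hxP (Finset.mem_erase.mp hx1).1)
          have e3 := Finset.card_le_card e2
          have e4 := Finset.card_insert_le (μ a1) (A \ P)
          have h4 : 1 ≤ A.card := Finset.card_pos.mpr ⟨a1, ha1⟩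
          omega

lemma fill_holes [Fintype V]
    (Hψ : ∀ v₀ : V, ∃ ψ : V → V, ∀ v, v ≠ v₀ → G.Adj v (ψ v) ∧ ψ (ψ v) = v) :
    ∀ (t : ℕ) (F C : Finset V) (p : V → V), C ⊆ F → MatchOn G C p →
      (F \ C).card ≤ t → F.card + t < Fintype.card V →
      ∃ (F' : Finset V) (q : V → V), F ⊆ F' ∧ F'.card ≤ F.card + (F \ C).card ∧
        MatchOn G F' q := by
  intro t
  induction t with
  | zero =>
    intro F C p hCF hM ht _
    have h : F \ C = ∅ := Finset.card_eq_zero.mp (Nat.le_zero.mp ht)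
    have hFC : F = C := Finset.Subset.antisymm (by
      intro v hv
      by_contra hvC
      have : v ∈ F \ C := Finset.mem_sdiff.mpr ⟨hv, hvC⟩
      rw [h] at this; exact absurd this (Finset.notMem_empty v)) hCF
    exact ⟨F, p, le_refl _, Nat.le_add_right _ _, hFC ▸ hM⟩
  | succ t ih =>
    intro F C p hCF hM ht hbudget
    by_cases hempty : (F \ C).card = 0
    · have h : F \ C = ∅ := Finset.card_eq_zero.mp hempty
      have hFC : F = C := Finset.Subset.antisymm (by
        intro v hv
        by_contra hvC
        have : v ∈ F \ C := Finset.mem_sdiff.mpr ⟨hv, hvC⟩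
        rw [h] at this; exact absurd this (Finset.notMem_empty v)) hCF
      exact ⟨F, p, le_refl _, Nat.le_add_right _ _, hFC ▸ hM⟩
    · obtain ⟨u, hu⟩ := Finset.card_pos.mp (Nat.pos_of_ne_zero hempty)
      obtain ⟨huF, huC⟩ := Finset.mem_sdiff.mp hu
      -- find v₀ outside F
      have hFlt : F.card < Fintype.card V := by omega
      obtain ⟨v₀, hv₀⟩ : ∃ v₀, v₀ ∉ F := by
        by_contra h
        push_neg at h
        have : Finset.univ ⊆ F := fun v _ => h v
        have := Finset.card_le_card this
        rw [Finset.card_univ] at this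
        omega
      obtain ⟨ψ, hψ⟩ := Hψ v₀
      have hv₀C : v₀ ∉ C := fun h => hv₀ (hCF h)
      have huv₀ : u ≠ v₀ := fun h => hv₀ (h ▸ huF)
      obtain ⟨z, q, hzC, hzu, _, hM'⟩ :=
        walk_lemma v₀ ψ hψ C.card C p u le_rfl hM huC hv₀C huv₀
      set F₂ := insert z F with hF₂
      set C₂ := insert u (insert z C) with hC₂
      have hC₂F₂ : C₂ ⊆ F₂ := by
        intro w hw
        simp only [hC₂, hF₂, Finset.mem_insert] at hw ⊢
        rcases hw with rfl | rfl | hw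
        · exact Or.inr huF
        · exact Or.inl rfl
        · exact Or.inr (hCF hw)
      have hsdiff : F₂ \ C₂ ⊆ (F \ C).erase u := by
        intro w hw
        simp only [hF₂, hC₂, Finset.mem_sdiff, Finset.mem_insert, Finset.mem_erase,
          Finset.mem_sdiff] at hw ⊢
        push_neg at hw
        obtain ⟨h1, h2, h3, h4⟩ := hw
        rcases h1 with rfl | h1
        · exact absurd rfl h3
        · exact ⟨h2, h1, h4⟩
      have hcard2 : (F₂ \ C₂).card ≤ t := by
        have h1 := Finset.card_le_card hsdiff
        have h2 : ((F \ C).erase u).card = (F \ C).card - 1 := Finset.card_erase_of_mem hu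
        omega
      have hF₂card : F₂.card ≤ F.card + 1 := Finset.card_insert_le _ _
      have hbudget2 : F₂.card + t < Fintype.card V := by omega
      obtain ⟨F', q', hsub, hcard', hM''⟩ := ih F₂ C₂ q hC₂F₂ hM' hcard2 hbudget2
      refine ⟨F', q', (Finset.subset_insert _ _).trans hsub, ?_, hM''⟩
      have h5 := Finset.card_le_card hsdiff
      have h6 := Finset.card_erase_of_mem hu
      omega

end AuxMatch

section ZModHelp
variable {K : ℕ}

lemma zhelp_val_add_one [NeZero K] (x : ZMod K) (h : x.val + 1 < K) :
    (x + 1).val = x.val + 1 := by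
  have h1 : ((x.val + 1 : ℕ) : ZMod K) = x + 1 := by
    push_cast [ZMod.natCast_val, ZMod.cast_id]
    ring
  rw [← h1, ZMod.val_natCast_of_lt h]

lemma zhelp_val_sub_one [NeZero K] (x : ZMod K) (h : 1 ≤ x.val) :
    (x - 1).val = x.val - 1 := by
  have h2 : x.val - 1 < K := by
    have := x.val_lt
    omega
  have h1 : ((x.val - 1 : ℕ) : ZMod K) = x - 1 := by
    have h3 : ((x.val - 1 : ℕ) : ZMod K) + 1 = ((x.val - 1 + 1 : ℕ) : ZMod K) := by push_cast; ring
    have h4 : x.val - 1 + 1 = x.val := by omega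
    have h5 : ((x.val : ℕ) : ZMod K) = x := ZMod.natCast_val x |>.trans (ZMod.cast_id _ _)
    rw [h4, h5] at h3
    linear_combination h3
  rw [← h1, ZMod.val_natCast_of_lt h2]

lemma zhelp_one_ne_zero (hK : 3 ≤ K) : (1 : ZMod K) ≠ 0 := by
  haveI : Fact (1 < K) := ⟨by omega⟩
  exact one_ne_zero

/-- even pairing : x ↦ x±1 according to parity of `x.val`. -/
def epair (x : ZMod K) : ZMod K := if x.val % 2 = 0 then x + 1 else x - 1

lemma epair_spec (hK : 3 ≤ K) (hKe : K % 2 = 0) (x : ZMod K) :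
    epair (epair x) = x ∧ (epair x = x + 1 ∨ x = epair x + 1) := by
  haveI : NeZero K := ⟨by omega⟩
  have hxlt := x.val_lt
  unfold epair
  by_cases h : x.val % 2 = 0
  · rw [if_pos h]
    have hlt : x.val + 1 < K := by omega
    have h1 : (x + 1).val = x.val + 1 := zhelp_val_add_one x hlt
    have h2 : ¬((x + 1).val % 2 = 0) := by omega
    rw [if_neg h2]
    exact ⟨by ring, Or.inl rfl⟩
  · rw [if_neg h]
    have hge : 1 ≤ x.val := by omega
    have h1 : (x - 1).val = x.val - 1 := zhelp_val_sub_one x hge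
    have h2 : (x - 1).val % 2 = 0 := by omega
    rw [if_pos h2]
    exact ⟨by ring, Or.inr (by ring)⟩

/-- odd pairing : pairs up `{1, …, K-1}`. -/
def opair (x : ZMod K) : ZMod K := if x.val % 2 = 1 then x + 1 else x - 1

lemma opair_spec (hK : 3 ≤ K) (hKo : K % 2 = 1) (x : ZMod K) (hx : x ≠ 0) :
    opair (opair x) = x ∧ (opair x = x + 1 ∨ x = opair x + 1) ∧ opair x ≠ 0 := by
  haveI : NeZero K := ⟨by omega⟩
  have hxlt := x.val_lt
  have hxne : x.val ≠ 0 := fun h => hx (by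
    have := ZMod.natCast_val x |>.trans (ZMod.cast_id _ _)
    rw [h] at this
    simpa using this.symm)
  have hvalne : ∀ (y : ZMod K), y.val ≠ 0 → y ≠ 0 := by
    intro y hy h
    rw [h, ZMod.val_zero] at hy
    exact hy rfl
  unfold opair
  by_cases h : x.val % 2 = 1
  · rw [if_pos h]
    have hlt : x.val + 1 < K := by omega
    have h1 : (x + 1).val = x.val + 1 := zhelp_val_add_one x hlt
    have h2 : ¬((x + 1).val % 2 = 1) := by omega
    rw [if_neg h2]
    refine ⟨by ring, Or.inl rfl, hvalne _ (by omega)⟩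
  · rw [if_neg h]
    have hge : 1 ≤ x.val := by omega
    have h1 : (x - 1).val = x.val - 1 := zhelp_val_sub_one x hge
    have h2 : (x - 1).val % 2 = 1 := by omega
    rw [if_pos h2]
    refine ⟨by ring, Or.inr (by ring), hvalne _ (by omega)⟩

end ZModHelp

section TorusPsi
variable {N m : ℕ}

lemma torus_adj_fst (hN : 3 ≤ N) {x x' : ZMod N} (y : ZMod m)
    (h : x' = x + 1 ∨ x = x' + 1) (hne : x ≠ x') :
    (torusGraph N m).Adj (x, y) (x', y) :=
  ⟨by simp [Prod.ext_iff]; exact hne, Or.inr ⟨rfl, by tauto⟩⟩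

lemma torus_adj_snd (hm : 3 ≤ m) (x : ZMod N) {y y' : ZMod m}
    (h : y' = y + 1 ∨ y = y' + 1) (hne : y ≠ y') :
    (torusGraph N m).Adj (x, y) (x, y') :=
  ⟨by simp [Prod.ext_iff]; exact hne, Or.inl ⟨rfl, by tauto⟩⟩

/-- Near-perfect matchings of the torus avoiding any given vertex. -/
lemma torus_psi (hN : 3 ≤ N) (hm : 3 ≤ m) (v₀ : ZMod N × ZMod m) :
    ∃ ψ : ZMod N × ZMod m → ZMod N × ZMod m,
      (∀ v, v ≠ v₀ → (torusGraph N m).Adj v (ψ v) ∧ ψ (ψ v) = v) ∧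
      (ψ v₀ = v₀ ∨ ((torusGraph N m).Adj v₀ (ψ v₀) ∧ ψ (ψ v₀) = v₀)) := by
  haveI : NeZero N := ⟨by omega⟩
  haveI : NeZero m := ⟨by omega⟩
  by_cases hNe : N % 2 = 0
  · have hall : ∀ v : ZMod N × ZMod m,
        (torusGraph N m).Adj v ((fun v : ZMod N × ZMod m => (epair v.1, v.2)) v) ∧
        (fun v : ZMod N × ZMod m => (epair v.1, v.2))
          ((fun v : ZMod N × ZMod m => (epair v.1, v.2)) v) = v := by
      intro v
      dsimp only
      obtain ⟨h1, h2⟩ := epair_spec hN hNe v.1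
      have hne : v.1 ≠ epair v.1 := by
        rcases h2 with h | h
        · rw [h]; intro hc; exact zhelp_one_ne_zero hN (by linear_combination -hc)
        · conv_lhs => rw [h]
          intro hc; exact zhelp_one_ne_zero hN (by linear_combination hc)
      exact ⟨torus_adj_fst hN v.2 h2 hne, by rw [h1]⟩
    exact ⟨_, fun v _ => hall v, Or.inr (hall v₀)⟩
  · by_cases hme : m % 2 = 0
    · have hall : ∀ v : ZMod N × ZMod m,
          (torusGraph N m).Adj v ((fun v : ZMod N × ZMod m => (v.1, epair v.2)) v) ∧
          (fun v : ZMod N × ZMod m => (v.1, epair v.2))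
            ((fun v : ZMod N × ZMod m => (v.1, epair v.2)) v) = v := by
        intro v
        dsimp only
        obtain ⟨h1, h2⟩ := epair_spec hm hme v.2
        have hne : v.2 ≠ epair v.2 := by
          rcases h2 with h | h
          · rw [h]; intro hc; exact zhelp_one_ne_zero hm (by linear_combination -hc)
          · conv_lhs => rw [h]
            intro hc; exact zhelp_one_ne_zero hm (by linear_combination hc)
        exact ⟨torus_adj_snd hm v.1 h2 hne, by rw [h1]⟩
      exact ⟨_, fun v _ => hall v, Or.inr (hall v₀)⟩
    · -- both odd
      obtain ⟨a, b⟩ := v₀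
      refine ⟨fun v => if v = (a, b) then (a, b) else
        (if v.1 = a then (a, b + opair (v.2 - b)) else (a + opair (v.1 - a), v.2)),
        fun v hv => ?_, Or.inl (if_pos rfl)⟩
      obtain ⟨x, y⟩ := v
      by_cases h1 : x = a
      · -- vertical move in column a
        subst h1
        have h2 : y ≠ b := by
          intro h; exact hv (by rw [h])
        have h3 : y - b ≠ 0 := sub_ne_zero.mpr h2
        obtain ⟨o1, o2, o3⟩ := opair_spec hm (by omega) (y - b) h3
        have keyb : b + opair (y - b) ≠ b := by
          intro h
          exact o3 (by linear_combination h)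
        have key : b + opair (y - b) ≠ y := by
          intro h
          rcases o2 with h' | h'
          · exact zhelp_one_ne_zero hm (by linear_combination h - h')
          · exact zhelp_one_ne_zero hm (by linear_combination - h - h')
        have hpne : ((x : ZMod N), b + opair (y - b)) ≠ (x, b) := by
          intro hc
          have := congrArg Prod.snd hc
          simp only at this
          exact keyb this
        have e1 : (fun v : ZMod N × ZMod m => if v = (x, b) then (x, b) else
            (if v.1 = x then ((x : ZMod N), b + opair (v.2 - b))
            else (x + opair (v.1 - x), v.2))) (x, y) = (x, b + opair (y - b)) := by
          dsimp only
          rw [if_neg hv, if_pos rfl]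
        rw [e1]
        have e2 : (fun v : ZMod N × ZMod m => if v = (x, b) then (x, b) else
            (if v.1 = x then ((x : ZMod N), b + opair (v.2 - b))
            else (x + opair (v.1 - x), v.2))) (x, b + opair (y - b)) = (x, y) := by
          dsimp only
          rw [if_neg hpne, if_pos rfl]
          have h4 : b + opair (y - b) - b = opair (y - b) := by ring
          rw [h4, o1]
          have h5 : b + (y - b) = y := by ring
          rw [h5]
        rw [e2]
        refine ⟨torus_adj_snd hm x ?_ (fun h => key h.symm), rfl⟩
        rcases o2 with h | h
        · left; linear_combination h
        · right; linear_combination h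
      · -- horizontal move
        have h3 : x - a ≠ 0 := sub_ne_zero.mpr h1
        obtain ⟨o1, o2, o3⟩ := opair_spec hN (by omega) (x - a) h3
        have key : a + opair (x - a) ≠ a := by
          intro h
          exact o3 (by linear_combination h)
        have keyx : a + opair (x - a) ≠ x := by
          intro h
          rcases o2 with h' | h'
          · exact zhelp_one_ne_zero hN (by linear_combination h - h')
          · exact zhelp_one_ne_zero hN (by linear_combination - h - h')
        have hpne : (a + opair (x - a), y) ≠ (a, b) := by
          intro hc
          have := congrArg Prod.fst hc
          simp only at this
          exact key this
        have e1 : (fun v : ZMod N × ZMod m => if v = (a, b) then (a, b) else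
            (if v.1 = a then ((a : ZMod N), b + opair (v.2 - b))
            else (a + opair (v.1 - a), v.2))) (x, y) = (a + opair (x - a), y) := by
          dsimp only
          rw [if_neg hv, if_neg h1]
        rw [e1]
        have e2 : (fun v : ZMod N × ZMod m => if v = (a, b) then (a, b) else
            (if v.1 = a then ((a : ZMod N), b + opair (v.2 - b))
            else (a + opair (v.1 - a), v.2))) (a + opair (x - a), y) = (x, y) := by
          dsimp only
          rw [if_neg hpne, if_neg key]
          have h4 : a + opair (x - a) - a = opair (x - a) := by ring
          rw [h4, o1]
          have h5 : a + (x - a) = x := by ring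
          rw [h5]
        rw [e2]
        refine ⟨torus_adj_fst hN y ?_ (fun h => keyx h.symm), rfl⟩
        rcases o2 with h | h
        · left; linear_combination h
        · right; linear_combination h

end TorusPsi

section Contract
variable {n m : ℕ}

/-- Contraction of the (n+1)-cycle onto the n-cycle: `n ↦ 0`. -/
def cyProj (n : ℕ) (x : ZMod (n + 1)) : ZMod n :=
  if x.val = n then 0 else (x.val : ZMod n)

def torProj (n m : ℕ) (v : ZMod (n + 1) × ZMod m) : ZMod n × ZMod m :=
  (cyProj n v.1, v.2)

lemma cyProj_step (hn : 3 ≤ n) (x : ZMod (n + 1)) :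
    cyProj n (x + 1) = cyProj n x + 1 ∨ cyProj n (x + 1) = cyProj n x := by
  haveI : NeZero (n + 1) := ⟨by omega⟩
  haveI : NeZero n := ⟨by omega⟩
  have hxlt : x.val < n + 1 := x.val_lt
  by_cases h1 : x.val = n
  · -- x = n : x+1 = 0, collapse
    right
    have hx : x = ((n : ℕ) : ZMod (n + 1)) := by
      rw [show ((n:ℕ) : ZMod (n+1)) = ((x.val : ℕ) : ZMod (n+1)) by rw [h1],
        ZMod.natCast_val, ZMod.cast_id]
    have h2 : x + 1 = 0 := by
      rw [hx]
      have : ((n : ℕ) : ZMod (n + 1)) + 1 = ((n + 1 : ℕ) : ZMod (n + 1)) := by push_cast; ring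
      rw [this, ZMod.natCast_self]
    rw [h2]
    unfold cyProj
    rw [if_neg (by rw [ZMod.val_zero]; omega), if_pos h1]
    simp
  · -- x.val < n
    left
    have h2 : (x + 1).val = x.val + 1 := by
      have h3 : ((x.val + 1 : ℕ) : ZMod (n+1)) = x + 1 := by
        push_cast [ZMod.natCast_val, ZMod.cast_id]; ring
      rw [← h3, ZMod.val_natCast_of_lt (by omega)]
    unfold cyProj
    rw [h2]
    by_cases h4 : x.val + 1 = n
    · rw [if_pos h4, if_neg h1]
      have : ((x.val : ℕ) : ZMod n) + 1 = ((x.val + 1 : ℕ) : ZMod n) := by push_cast; ring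
      rw [this, h4, ZMod.natCast_self]
    · rw [if_neg h4, if_neg h1]
      push_cast
      ring

lemma cyProj_lift (hn : 3 ≤ n) (w : ZMod n) :
    cyProj n ((w.val : ZMod (n + 1))) = w := by
  haveI : NeZero (n + 1) := ⟨by omega⟩
  haveI : NeZero n := ⟨by omega⟩
  have h1 : w.val < n := w.val_lt
  have h2 : ((w.val : ZMod (n+1))).val = w.val := ZMod.val_natCast_of_lt (by omega)
  unfold cyProj
  rw [if_neg (by omega), h2, ZMod.natCast_val, ZMod.cast_id]

lemma torProj_edge (hn : 3 ≤ n) (hm : 3 ≤ m) {a b : ZMod (n + 1) × ZMod m}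
    (h : (torusGraph (n + 1) m).Adj a b) :
    torProj n m a = torProj n m b ∨ (torusGraph n m).Adj (torProj n m a) (torProj n m b) := by
  haveI : NeZero n := ⟨by omega⟩
  obtain ⟨hne, ⟨h1, h2⟩ | ⟨h1, h2⟩⟩ := h
  · -- vertical edge
    right
    have hsne : a.2 ≠ b.2 := by
      rcases h2 with h | h
      · intro hc; rw [hc] at h; exact zhelp_one_ne_zero hm (by linear_combination -h)
      · intro hc; rw [hc] at h; exact zhelp_one_ne_zero hm (by linear_combination -h)
    refine ⟨?_, Or.inl ⟨by rw [torProj, torProj, h1], h2⟩⟩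
    intro hc
    simp only [torProj, Prod.mk.injEq] at hc
    exact hsne hc.2
  · -- horizontal edge
    have key : ∀ x y : ZMod (n + 1), y = x + 1 →
        cyProj n y = cyProj n x + 1 ∨ cyProj n y = cyProj n x := by
      intro x y hxy; rw [hxy]; exact cyProj_step hn x
    rcases h2 with h2 | h2
    · rcases key b.1 a.1 h2 with hk | hk
      · right
        refine ⟨?_, Or.inr ⟨h1, Or.inl hk⟩⟩
        intro hc
        simp only [torProj, Prod.mk.injEq] at hc
        rw [hc.1] at hk
        exact zhelp_one_ne_zero hn (by linear_combination -hk)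
      · left
        simp only [torProj, Prod.mk.injEq]
        exact ⟨hk, h1⟩
    · rcases key a.1 b.1 h2 with hk | hk
      · right
        refine ⟨?_, Or.inr ⟨h1, Or.inr hk⟩⟩
        intro hc
        simp only [torProj, Prod.mk.injEq] at hc
        rw [hc.1] at hk
        exact zhelp_one_ne_zero hn (by linear_combination -hk)
      · left
        simp only [torProj, Prod.mk.injEq]
        exact ⟨hk.symm, h1⟩

lemma torProj_fiber (hn : 3 ≤ n) (A : Finset (ZMod (n + 1) × ZMod m)) [DecidableEq (ZMod n × ZMod m)] [DecidableEq (ZMod (n+1) × ZMod m)]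
    (w : ZMod n × ZMod m) :
    (A.filter (fun a => torProj n m a = w)).card ≤ 2 := by
  haveI : NeZero (n + 1) := ⟨by omega⟩
  haveI : NeZero n := ⟨by omega⟩
  have hsub : A.filter (fun a => torProj n m a = w) ⊆
      {((w.1.val : ZMod (n + 1)), w.2), ((n : ZMod (n + 1)), w.2)} := by
    intro v hv
    obtain ⟨hvA, hvw⟩ := Finset.mem_filter.mp hv
    have hfst : cyProj n v.1 = w.1 := congrArg Prod.fst hvw
    have hsnd : v.2 = w.2 := congrArg Prod.snd hvw
    simp only [Finset.mem_insert, Finset.mem_singleton]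
    by_cases hval : v.1.val = n
    · right
      have : v.1 = ((n : ℕ) : ZMod (n + 1)) := by
        rw [show ((n:ℕ) : ZMod (n+1)) = ((v.1.val : ℕ) : ZMod (n+1)) by rw [hval],
          ZMod.natCast_val, ZMod.cast_id]
      exact Prod.ext this hsnd
    · left
      have h2 : cyProj n v.1 = ((v.1.val : ℕ) : ZMod n) := if_neg hval
      have h3 : v.1.val < n := by have := v.1.val_lt; omega
      have h4 : w.1.val = v.1.val := by
        rw [← hfst, h2, ZMod.val_natCast_of_lt h3]
      have h5 : v.1 = ((w.1.val : ℕ) : ZMod (n + 1)) := by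
        rw [h4, ZMod.natCast_val, ZMod.cast_id]
      exact Prod.ext h5 hsnd
  calc (A.filter (fun a => torProj n m a = w)).card ≤ _ := Finset.card_le_card hsub
    _ ≤ 2 := by
      apply le_trans (Finset.card_insert_le _ _)
      simp

end Contract


section Glue
variable {V : Type*} [DecidableEq V] {G : SimpleGraph V}

/-- From a `MatchOn` covering all of `↑F` plus domination, get a paired dominating set. -/
lemma matchOn_isPairedDomSet {F : Finset V} {q : V → V}
    (hM : MatchOn G F q) (hdom : IsDomSet G ↑F) : IsPairedDomSet G (↑F : Set V) := by
  refine ⟨hdom, ?_⟩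
  refine ⟨{ verts := Set.univ
            Adj := fun x y => (x : V) ≠ (y : V) ∧ q x = y ∧ q y = x
            adj_sub := ?_
            edge_vert := fun _ => Set.mem_univ _
            symm := ⟨fun x y ⟨h1, h2, h3⟩ => ⟨h1.symm, h3, h2⟩⟩ }, ?_, fun _ => Set.mem_univ _⟩
  · rintro x y ⟨h1, h2, h3⟩
    have hx : (x : V) ∈ F := Finset.mem_coe.mp x.2
    have := (hM x hx).2.2
    rw [h2] at this
    exact this
  · rintro v -
    have hv : (v : V) ∈ F := Finset.mem_coe.mp v.2
    obtain ⟨hq1, hq2, hq3⟩ := hM v hv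
    refine ⟨⟨q v, Finset.mem_coe.mpr hq1⟩, ⟨(G.ne_of_adj hq3), rfl, hq2⟩, ?_⟩
    rintro w ⟨hw1, hw2, hw3⟩
    exact Subtype.ext hw2.symm

end Glue

section Expl
variable {N m : ℕ}

/-- Explicit paired dominating sets of tori, of size ≤ Nm. -/
lemma torus_expl (hN : 3 ≤ N) (hm : 3 ≤ m) :
    ∃ D : Set (ZMod N × ZMod m), IsPairedDomSet (torusGraph N m) D ∧ D.ncard ≤ N * m := by
  haveI : NeZero N := ⟨by omega⟩
  haveI : NeZero m := ⟨by omega⟩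
  have hcardV : Fintype.card (ZMod N × ZMod m) = N * m := by
    rw [Fintype.card_prod, ZMod.card, ZMod.card]
  obtain ⟨ψ, hψ, hψ0⟩ := torus_psi hN hm ((0 : ZMod N), (0 : ZMod m))
  rcases hψ0 with h0 | ⟨hadj0, hinv0⟩
  · -- v₀ is fixed by ψ: use univ minus v₀
    refine ⟨(↑(Finset.univ.erase ((0 : ZMod N), (0 : ZMod m))) : Set (ZMod N × ZMod m)),
      ?_, ?_⟩
    · apply matchOn_isPairedDomSet (q := ψ)
      · intro v hv
        have hvne : v ≠ ((0 : ZMod N), (0 : ZMod m)) := (Finset.mem_erase.mp hv).1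
        obtain ⟨hadj, hinv⟩ := hψ v hvne
        refine ⟨?_, hinv, hadj⟩
        refine Finset.mem_erase.mpr ⟨?_, Finset.mem_univ _⟩
        intro hc
        rw [← hinv, hc, h0] at hvne
        exact hvne rfl
      · intro v hv
        have hvv : v = ((0 : ZMod N), (0 : ZMod m)) := by
          by_contra hc
          exact hv (Finset.mem_coe.mpr (Finset.mem_erase.mpr ⟨hc, Finset.mem_univ _⟩))
        subst hvv
        refine ⟨((0 : ZMod N), (0 : ZMod m) + 1), ?_, ?_⟩
        · refine Finset.mem_coe.mpr (Finset.mem_erase.mpr ⟨?_, Finset.mem_univ _⟩)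
          intro hc
          have h2 := congrArg Prod.snd hc
          simp only at h2
          exact zhelp_one_ne_zero hm (by linear_combination h2)
        · refine torus_adj_snd hm (0 : ZMod N) (Or.inl rfl) ?_
          intro hc
          exact zhelp_one_ne_zero hm (by linear_combination -hc)
    · rw [Set.ncard_coe_finset]
      calc (Finset.univ.erase ((0 : ZMod N), (0 : ZMod m))).card
          ≤ Finset.univ.card := Finset.card_erase_le
        _ = N * m := by rw [Finset.card_univ, hcardV]
  · -- ψ is a perfect matching of the whole torus
    refine ⟨(↑(Finset.univ : Finset (ZMod N × ZMod m)) : Set (ZMod N × ZMod m)), ?_, ?_⟩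
    · apply matchOn_isPairedDomSet (q := ψ)
      · intro v _
        by_cases hv : v = ((0 : ZMod N), (0 : ZMod m))
        · subst hv
          exact ⟨Finset.mem_univ _, hinv0, hadj0⟩
        · obtain ⟨hadj, hinv⟩ := hψ v hv
          exact ⟨Finset.mem_univ _, hinv, hadj⟩
      · intro v hv
        exact absurd (by simp : v ∈ (↑(Finset.univ : Finset (ZMod N × ZMod m)) :
          Set (ZMod N × ZMod m))) hv
    · rw [Set.ncard_coe_finset, Finset.card_univ, hcardV]

end Expl


theorem stmt12 (n m : ℕ) (hn : 3 ≤ n) (hm : 3 ≤ m) :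
    pairedDomNum (torusGraph n m) ≤ pairedDomNum (torusGraph (n + 1) m) := by
  classical
  haveI : NeZero n := ⟨by omega⟩
  haveI : NeZero m := ⟨by omega⟩
  haveI : NeZero (n + 1) := ⟨by omega⟩
  have hcardV : Fintype.card (ZMod n × ZMod m) = n * m := by
    rw [Fintype.card_prod, ZMod.card, ZMod.card]
  -- the right-hand side is attained
  obtain ⟨D₀, hD₀, _⟩ := torus_expl (N := n + 1) (m := m) (by omega) hm
  have hBne : {k | ∃ D : Set (ZMod (n+1) × ZMod m),
      IsPairedDomSet (torusGraph (n+1) m) D ∧ D.ncard = k}.Nonempty :=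
    ⟨D₀.ncard, D₀, hD₀, rfl⟩
  obtain ⟨D', hpds', hkcard⟩ := Nat.sInf_mem hBne
  have hRHS : pairedDomNum (torusGraph (n + 1) m) = D'.ncard := hkcard.symm
  rw [hRHS]
  -- suffices to find a paired dominating set of C_n × C_m of size ≤ |D'|
  have key : ∃ j, (∃ D : Set (ZMod n × ZMod m),
      IsPairedDomSet (torusGraph n m) D ∧ D.ncard = j) ∧ j ≤ D'.ncard := by
    by_cases hcase : n * m ≤ D'.ncard
    · obtain ⟨Dn, hDn, hDncard⟩ := torus_expl hn hm
      exact ⟨Dn.ncard, ⟨Dn, hDn, rfl⟩, le_trans hDncard hcase⟩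
    · -- contraction
      push_neg at hcase
      have hfin : D'.Finite := Set.toFinite D'
      have hAcard : hfin.toFinset.card = D'.ncard :=
        (Set.ncard_eq_toFinset_card D' hfin).symm
      obtain ⟨hdom', M, hPM⟩ := hpds'
      -- partner function on the subtype
      have hpart : ∀ v : ↥D', ∃! w : ↥D', M.Adj v w := fun v => hPM.1 (hPM.2 v)
      have hpμ_adj : ∀ v, M.Adj v ((hpart v).exists.choose) :=
        fun v => (hpart v).exists.choose_spec
      set pμ : ↥D' → ↥D' := fun v => (hpart v).exists.choose with hpμ
      have hpμ_adj' : ∀ v, M.Adj v (pμ v) := hpμ_adj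
      have hpμ_inv : ∀ v, pμ (pμ v) = v := by
        intro v
        have h1 : M.Adj (pμ v) v := (hpμ_adj' v).symm
        have h2 : M.Adj (pμ v) (pμ (pμ v)) := hpμ_adj' (pμ v)
        obtain ⟨w, hw, huniq⟩ := hpart (pμ v)
        rw [huniq _ h2, huniq _ h1]
      have hMadj : ∀ v w : ↥D', M.Adj v w → (torusGraph (n+1) m).Adj ↑v ↑w := by
        intro v w h
        exact M.adj_sub h
      -- total μ
      set μtot : (ZMod (n+1) × ZMod m) → (ZMod (n+1) × ZMod m) :=
        fun a => if h : a ∈ D' then ↑(pμ ⟨a, h⟩) else a with hμtot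
      have hμmem : ∀ (a : ZMod (n+1) × ZMod m) (h : a ∈ D'), μtot a = ↑(pμ ⟨a, h⟩) := by
        intro a h
        simp only [hμtot]
        rw [dif_pos h]
      have hμ : ∀ a ∈ hfin.toFinset, μtot a ∈ hfin.toFinset ∧ μtot a ≠ a ∧
          μtot (μtot a) = a ∧
          (torProj n m (μtot a) = torProj n m a ∨
            (torusGraph n m).Adj (torProj n m a) (torProj n m (μtot a))) := by
        intro a haA
        have haD : a ∈ D' := (Set.Finite.mem_toFinset hfin).mp haA
        have e1 : μtot a = ↑(pμ ⟨a, haD⟩) := hμmem a haD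
        have hadj1 : (torusGraph (n+1) m).Adj a ↑(pμ ⟨a, haD⟩) :=
          hMadj ⟨a, haD⟩ _ (hpμ_adj' ⟨a, haD⟩)
        refine ⟨?_, ?_, ?_, ?_⟩
        · rw [e1]
          exact (Set.Finite.mem_toFinset hfin).mpr (pμ ⟨a, haD⟩).2
        · rw [e1]
          exact fun hc => (torusGraph (n+1) m).ne_of_adj hadj1 hc.symm
        · rw [e1]
          have hmem2 : (↑(pμ ⟨a, haD⟩) : ZMod (n+1) × ZMod m) ∈ D' := (pμ ⟨a, haD⟩).2
          rw [hμmem _ hmem2]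
          have h5 : (⟨↑(pμ ⟨a, haD⟩), hmem2⟩ : ↥D') = pμ ⟨a, haD⟩ := Subtype.ext rfl
          rw [h5, hpμ_inv]
        · rw [e1]
          rcases torProj_edge hn hm hadj1 with h | h
          · exact Or.inl h.symm
          · exact Or.inr h
      obtain ⟨C, p, hC1, hC2, hC3⟩ :=
        contract_matching (torProj n m) hfin.toFinset.card hfin.toFinset hfin.toFinset
          μtot le_rfl (Finset.Subset.refl _) hμ (fun b => torProj_fiber hn hfin.toFinset b)
      rw [Finset.sdiff_self, Finset.card_empty] at hC3
      -- fill the holes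
      have Hψ : ∀ v₀ : ZMod n × ZMod m, ∃ ψ : ZMod n × ZMod m → ZMod n × ZMod m, ∀ v, v ≠ v₀ →
          (torusGraph n m).Adj v (ψ v) ∧ ψ (ψ v) = v := by
        intro v₀
        obtain ⟨ψ, h1, _⟩ := torus_psi hn hm v₀
        exact ⟨ψ, h1⟩
      have hbudget : (hfin.toFinset.image (torProj n m)).card +
          ((hfin.toFinset.image (torProj n m)) \ C).card
          < Fintype.card (ZMod n × ZMod m) := by
        rw [hcardV]
        omega
      obtain ⟨F', q, hFsub, hFcard, hFM⟩ :=
        fill_holes Hψ ((hfin.toFinset.image (torProj n m)) \ C).card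
          (hfin.toFinset.image (torProj n m)) C p hC1 hC2 le_rfl hbudget
      -- build the paired dominating set
      have himg_eq : (↑(hfin.toFinset.image (torProj n m)) : Set (ZMod n × ZMod m))
          = torProj n m '' D' := by
        rw [Finset.coe_image, Set.Finite.coe_toFinset]
      have hdomF : IsDomSet (torusGraph n m) (↑F' : Set (ZMod n × ZMod m)) := by
        intro v hv
        have hvD : v ∉ torProj n m '' D' := by
          intro hc
          rw [← himg_eq] at hc
          exact hv (Finset.coe_subset.mpr hFsub hc)
        have hproj : torProj n m ((v.1.val : ZMod (n+1)), v.2) = v := by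
          rw [torProj]
          exact Prod.ext (cyProj_lift hn v.1) rfl
        have hv'D : ((v.1.val : ZMod (n+1)), v.2) ∉ D' := by
          intro hc
          exact hvD ⟨_, hc, hproj⟩
        obtain ⟨u', hu'D, hu'adj⟩ := hdom' _ hv'D
        rcases torProj_edge hn hm hu'adj with h | h
        · exact absurd ⟨u', hu'D, by rw [← h, hproj]⟩ hvD
        · refine ⟨torProj n m u', ?_, by rw [← hproj]; exact h⟩
          have h6 : torProj n m u' ∈ torProj n m '' D' := ⟨u', hu'D, rfl⟩
          rw [← himg_eq] at h6
          exact Finset.coe_subset.mpr hFsub h6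
      refine ⟨F'.card, ⟨(↑F' : Set (ZMod n × ZMod m)),
        matchOn_isPairedDomSet hFM hdomF, Set.ncard_coe_finset F'⟩, ?_⟩
      omega
  obtain ⟨j, hjA, hjk⟩ := key
  exact le_trans (Nat.sInf_le hjA) hjk
end

section
/- For all n, m ≥ 3, the paired domination number of C_n × C_m is at most 4⌈n/4⌉⌈m/4⌉. -/
set_option maxHeartbeats 1600000
set_option linter.unusedVariables false
set_option linter.unnecessarySeqFocus false
set_option linter.unreachableTactic false
set_option linter.unusedTactic false


open SimpleGraph

def succw (k y : ℕ) : ℕ := if y + 1 = k then 0 else y + 1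

def Pn (n m x y : ℕ) : Prop :=
  if n % 4 = 1 ∧ x = n - 1 then (m % 2 = 0 ∨ y ≠ 1)
  else if n % 4 = 3 ∧ x = n - 1 then (y % 4 = 1 ∨ y % 4 = 2 ∨ (m % 4 = 2 ∧ y = 0))
  else if n % 4 = 2 ∧ (x = n - 1 ∨ x = n - 2) then
    (y % 4 = 0 ∨ y % 4 = 2 ∨ (m % 4 = 2 ∧ y = m - 1))
  else if x % 4 < 2 then y % 4 = 0
  else (y % 4 = 2 ∨ (m % 4 = 2 ∧ y = m - 1))

instance PnDec (n m x y : ℕ) : Decidable (Pn n m x y) := by unfold Pn; infer_instance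

def pax (n x : ℕ) : ℕ :=
  if n % 4 % 2 = 1 ∧ x = n - 1 then x else if x % 2 = 0 then x + 1 else x - 1

def pay (n m x y : ℕ) : ℕ :=
  if n % 4 % 2 = 1 ∧ x = n - 1 then
    (if n % 4 = 1 then
       (if m % 2 = 1 ∧ y = 0 then m - 1 else if m % 2 = 1 ∧ y = m - 1 then 0
        else if y % 2 = 0 then y + 1 else y - 1)
     else
       (if m % 4 = 2 ∧ y = 0 then m - 1 else if m % 4 = 2 ∧ y = m - 1 then 0
        else if y % 4 = 1 then y + 1 else y - 1))
  else y

lemma Pn_row1 (n m x y : ℕ) (c1 : n % 4 = 1) (cx : x = n - 1) :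
    Pn n m x y ↔ (m % 2 = 0 ∨ y ≠ 1) := by
  unfold Pn; rw [if_pos ⟨c1, cx⟩]

lemma Pn_row3 (n m x y : ℕ) (c3 : n % 4 = 3) (cx : x = n - 1) :
    Pn n m x y ↔ (y % 4 = 1 ∨ y % 4 = 2 ∨ (m % 4 = 2 ∧ y = 0)) := by
  unfold Pn; rw [if_neg (by omega), if_pos ⟨c3, cx⟩]

lemma pay_row1 (n m x y : ℕ) (c1 : n % 4 = 1) (cx : x = n - 1) :
    pay n m x y = (if m % 2 = 1 ∧ y = 0 then m - 1 else if m % 2 = 1 ∧ y = m - 1 then 0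
        else if y % 2 = 0 then y + 1 else y - 1) := by
  unfold pay; rw [if_pos ⟨by omega, cx⟩, if_pos c1]

lemma pay_row3 (n m x y : ℕ) (c3 : n % 4 = 3) (cx : x = n - 1) :
    pay n m x y = (if m % 4 = 2 ∧ y = 0 then m - 1 else if m % 4 = 2 ∧ y = m - 1 then 0
        else if y % 4 = 1 then y + 1 else y - 1) := by
  unfold pay; rw [if_pos ⟨by omega, cx⟩, if_neg (by omega)]


lemma pa_spec (n m x y : ℕ) (hn : 3 ≤ n) (hm : 3 ≤ m) (hx : x < n) (hy : y < m)
    (h : Pn n m x y) :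
    Pn n m (pax n x) (pay n m x y) ∧ pax n x < n ∧ pay n m x y < m ∧
    ¬(pax n x = x ∧ pay n m x y = y) ∧
    pax n (pax n x) = x ∧ pay n m (pax n x) (pay n m x y) = y ∧
    ((pax n x = x ∧ (pay n m x y = succw m y ∨ y = succw m (pay n m x y))) ∨
     (pay n m x y = y ∧ (pax n x = succw n x ∨ x = succw n (pax n x)))) := by
  by_cases c0 : n % 4 % 2 = 1 ∧ x = n - 1
  · have hpx : pax n x = x := if_pos c0
    simp only [hpx]
    by_cases c1 : n % 4 = 1
    · rw [Pn_row1 n m x y c1 c0.2] at h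
      by_cases cA : m % 2 = 1 ∧ y = 0
      · have e1 : pay n m x y = m - 1 := by rw [pay_row1 n m x y c1 c0.2, if_pos cA]
        have e2 : pay n m x (m - 1) = y := by
          rw [pay_row1 n m x (m-1) c1 c0.2, if_neg (by omega), if_pos ⟨cA.1, rfl⟩]; omega
        rw [e1, e2]
        refine ⟨by rw [Pn_row1 n m x _ c1 c0.2]; omega, hx, by omega, by omega, trivial, rfl,
          Or.inl ⟨trivial, Or.inr ?_⟩⟩
        unfold succw; rw [if_pos (by omega)]; omega
      by_cases cB : m % 2 = 1 ∧ y = m - 1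
      · have e1 : pay n m x y = 0 := by
          rw [pay_row1 n m x y c1 c0.2, if_neg cA, if_pos cB]
        have e2 : pay n m x 0 = y := by
          rw [pay_row1 n m x 0 c1 c0.2, if_pos ⟨cB.1, rfl⟩]; omega
        rw [e1, e2]
        refine ⟨by rw [Pn_row1 n m x _ c1 c0.2]; omega, hx, by omega, by omega, trivial, rfl,
          Or.inl ⟨trivial, Or.inl ?_⟩⟩
        unfold succw; rw [if_pos (by omega)]
      by_cases cC : y % 2 = 0
      · have e1 : pay n m x y = y + 1 := by
          rw [pay_row1 n m x y c1 c0.2, if_neg cA, if_neg cB, if_pos cC]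
        have e2 : pay n m x (y + 1) = y := by
          rw [pay_row1 n m x (y+1) c1 c0.2, if_neg (by omega), if_neg (by omega),
            if_neg (by omega)]; omega
        rw [e1, e2]
        refine ⟨by rw [Pn_row1 n m x _ c1 c0.2]; omega, hx, by omega, by omega, trivial, rfl,
          Or.inl ⟨trivial, Or.inl ?_⟩⟩
        unfold succw; rw [if_neg (by omega)]
      · have e1 : pay n m x y = y - 1 := by
          rw [pay_row1 n m x y c1 c0.2, if_neg cA, if_neg cB, if_neg cC]
        have e2 : pay n m x (y - 1) = y := by
          rw [pay_row1 n m x (y-1) c1 c0.2, if_neg (by omega), if_neg (by omega),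
            if_pos (by omega)]; omega
        rw [e1, e2]
        refine ⟨by rw [Pn_row1 n m x _ c1 c0.2]; omega, hx, by omega, by omega, trivial, rfl,
          Or.inl ⟨trivial, Or.inr ?_⟩⟩
        unfold succw; rw [if_neg (by omega)]; omega
    · have c3 : n % 4 = 3 := by omega
      rw [Pn_row3 n m x y c3 c0.2] at h
      by_cases cA : m % 4 = 2 ∧ y = 0
      · have e1 : pay n m x y = m - 1 := by rw [pay_row3 n m x y c3 c0.2, if_pos cA]
        have e2 : pay n m x (m - 1) = y := by
          rw [pay_row3 n m x (m-1) c3 c0.2, if_neg (by omega), if_pos ⟨cA.1, rfl⟩]; omega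
        rw [e1, e2]
        refine ⟨by rw [Pn_row3 n m x _ c3 c0.2]; omega, hx, by omega, by omega, trivial, rfl,
          Or.inl ⟨trivial, Or.inr ?_⟩⟩
        unfold succw; rw [if_pos (by omega)]; omega
      by_cases cB : m % 4 = 2 ∧ y = m - 1
      · have e1 : pay n m x y = 0 := by
          rw [pay_row3 n m x y c3 c0.2, if_neg cA, if_pos cB]
        have e2 : pay n m x 0 = y := by
          rw [pay_row3 n m x 0 c3 c0.2, if_pos ⟨cB.1, rfl⟩]; omega
        rw [e1, e2]
        refine ⟨by rw [Pn_row3 n m x _ c3 c0.2]; omega, hx, by omega, by omega, trivial, rfl,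
          Or.inl ⟨trivial, Or.inl ?_⟩⟩
        unfold succw; rw [if_pos (by omega)]
      by_cases cC : y % 4 = 1
      · have e1 : pay n m x y = y + 1 := by
          rw [pay_row3 n m x y c3 c0.2, if_neg cA, if_neg cB, if_pos cC]
        have e2 : pay n m x (y + 1) = y := by
          rw [pay_row3 n m x (y+1) c3 c0.2, if_neg (by omega), if_neg (by omega),
            if_neg (by omega)]; omega
        rw [e1, e2]
        refine ⟨by rw [Pn_row3 n m x _ c3 c0.2]; omega, hx, by omega, by omega, trivial, rfl,
          Or.inl ⟨trivial, Or.inl ?_⟩⟩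
        unfold succw; rw [if_neg (by omega)]
      · have hy2 : y % 4 = 2 := by omega
        have e1 : pay n m x y = y - 1 := by
          rw [pay_row3 n m x y c3 c0.2, if_neg cA, if_neg cB, if_neg cC]
        have e2 : pay n m x (y - 1) = y := by
          rw [pay_row3 n m x (y-1) c3 c0.2, if_neg (by omega), if_neg (by omega),
            if_pos (by omega)]; omega
        rw [e1, e2]
        refine ⟨by rw [Pn_row3 n m x _ c3 c0.2]; omega, hx, by omega, by omega, trivial, rfl,
          Or.inl ⟨trivial, Or.inr ?_⟩⟩
        unfold succw; rw [if_neg (by omega)]; omega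
  · have hpy : pay n m x y = y := if_neg c0
    rw [hpy]
    have hpax : pax n x = if x % 2 = 0 then x + 1 else x - 1 := if_neg c0
    by_cases hp : x % 2 = 0
    · rw [hpax, if_pos hp]
      have hlt : x + 1 < n := by omega
      refine ⟨?_, hlt, hy, by omega, ?_, ?_, Or.inr ⟨rfl, ?_⟩⟩
      · unfold Pn at h ⊢; split_ifs at h ⊢ <;> omega
      · unfold pax; split_ifs <;> omega
      · unfold pay; split_ifs <;> omega
      · unfold succw; split_ifs <;> omega
    · rw [hpax, if_neg hp]
      refine ⟨?_, by omega, hy, by omega, ?_, ?_, Or.inr ⟨rfl, ?_⟩⟩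
      · unfold Pn at h ⊢; split_ifs at h ⊢ <;> omega
      · unfold pax; split_ifs <;> omega
      · unfold pay; split_ifs <;> omega
      · unfold succw; split_ifs <;> omega

lemma dom_nat (n m x y : ℕ) (hn : 3 ≤ n) (hm : 3 ≤ m) (hx : x < n) (hy : y < m)
    (h : ¬ Pn n m x y) :
    ∃ x' y', x' < n ∧ y' < m ∧ Pn n m x' y' ∧
      ((x' = x ∧ (y' = succw m y ∨ y = succw m y')) ∨
       (y' = y ∧ (x' = succw n x ∨ x = succw n x'))) := by
  unfold Pn at h
  split_ifs at h with h1 h2 h3 h4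
  · -- r=1 special row; m odd, y = 1
    exact ⟨x, 0, hx, by omega, by unfold Pn; split_ifs <;> omega,
      by unfold succw; split_ifs <;> omega⟩
  · -- r=3 special row
    by_cases hy3 : y % 4 = 3
    · exact ⟨x, y - 1, hx, by omega, by unfold Pn; split_ifs <;> omega,
        by unfold succw; split_ifs <;> omega⟩
    by_cases hy0 : y = 0
    · exact ⟨x, 1, hx, by omega, by unfold Pn; split_ifs <;> omega,
        by unfold succw; split_ifs <;> omega⟩
    by_cases hylt : y + 1 < m
    · exact ⟨x, y + 1, hx, by omega, by unfold Pn; split_ifs <;> omega,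
        by unfold succw; split_ifs <;> omega⟩
    · exact ⟨x - 1, y, by omega, hy, by unfold Pn; split_ifs <;> omega,
        by unfold succw; split_ifs <;> omega⟩
  · -- r=2 special rows
    exact ⟨x, y - 1, hx, by omega, by unfold Pn; split_ifs <;> omega,
      by unfold succw; split_ifs <;> omega⟩
  · -- regular, t = 0
    by_cases hy1 : y % 4 = 1
    · exact ⟨x, y - 1, hx, by omega, by unfold Pn; split_ifs <;> omega,
        by unfold succw; split_ifs <;> omega⟩
    by_cases hy3 : y % 4 = 3
    · exact ⟨x, succw m y, hx, by unfold succw; split_ifs <;> omega,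
        by unfold Pn succw; split_ifs <;> omega,
        by unfold succw; split_ifs <;> omega⟩
    -- y % 4 = 2
    by_cases hx0 : x % 4 = 0
    · by_cases hxz : x = 0
      · exact ⟨n - 1, y, by omega, hy, by unfold Pn; split_ifs <;> omega,
          by unfold succw; split_ifs <;> omega⟩
      · exact ⟨x - 1, y, by omega, hy, by unfold Pn; split_ifs <;> omega,
          by unfold succw; split_ifs <;> omega⟩
    · exact ⟨x + 1, y, by omega, hy, by unfold Pn; split_ifs <;> omega,
        by unfold succw; split_ifs <;> omega⟩
  · -- regular, t = 2
    by_cases hy1 : y % 4 = 1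
    · exact ⟨x, y + 1, hx, by omega, by unfold Pn; split_ifs <;> omega,
        by unfold succw; split_ifs <;> omega⟩
    by_cases hy3 : y % 4 = 3
    · exact ⟨x, y - 1, hx, by omega, by unfold Pn; split_ifs <;> omega,
        by unfold succw; split_ifs <;> omega⟩
    -- y % 4 = 0
    by_cases hx2 : x % 4 = 2
    · exact ⟨x - 1, y, by omega, hy, by unfold Pn; split_ifs <;> omega,
        by unfold succw; split_ifs <;> omega⟩
    · exact ⟨succw n x, y, by unfold succw; split_ifs <;> omega, hy,
        by unfold Pn succw; split_ifs <;> omega,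
        by unfold succw; split_ifs <;> omega⟩



lemma cnt_mod4' (c : ℕ) (M : ℕ) (hc : c < 4) :
    ((Finset.range M).filter (fun y => y % 4 = c)).card = (M + 3 - c) / 4 := by
  induction M with
  | zero => simp; omega
  | succ k ih =>
    rw [Finset.range_add_one, Finset.filter_insert]
    split_ifs with hk
    · rw [Finset.card_insert_of_notMem (by simp)]; omega
    · omega

lemma cnt_patch (c d : ℕ) (m : ℕ) (hc : c < 4) :
    ((Finset.range m).filter (fun y => y % 4 = c ∨ (m % 4 = 2 ∧ y = d))).card ≤
      (m + 3 - c) / 4 + (if m % 4 = 2 then 1 else 0) := by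
  rw [Finset.filter_or]
  refine le_trans (Finset.card_union_le _ _) (add_le_add (le_of_eq (cnt_mod4' c m hc)) ?_)
  split_ifs with h2
  · refine le_trans (Finset.card_le_card (fun y hy => ?_)) (Finset.card_singleton d).le
    simp only [Finset.mem_filter] at hy
    simp [hy.2.2]
  · have he : (Finset.range m).filter (fun y => m % 4 = 2 ∧ y = d) = ∅ :=
      Finset.filter_false_of_mem (fun y _ => by simp [h2])
    simp [he]

/-- row-count for a regular row -/
lemma rcnt_reg (n m x : ℕ) (hm : 3 ≤ m)
    (h1 : ¬(n % 4 = 1 ∧ x = n - 1)) (h3 : ¬(n % 4 = 3 ∧ x = n - 1))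
    (h2 : ¬(n % 4 = 2 ∧ (x = n - 1 ∨ x = n - 2))) :
    ((Finset.range m).filter (fun y => Pn n m x y)).card ≤ (m + 3) / 4 := by
  have hcg : ∀ y : ℕ, Pn n m x y ↔
      (if x % 4 < 2 then y % 4 = 0 else (y % 4 = 2 ∨ (m % 4 = 2 ∧ y = m - 1))) := by
    intro y; unfold Pn; rw [if_neg h1, if_neg h3, if_neg h2]
  rw [Finset.filter_congr (fun y _ => (hcg y))]
  by_cases hx : x % 4 < 2
  · simp only [if_pos hx]
    rw [cnt_mod4' 0 m (by omega)]; omega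
  · simp only [if_neg hx]
    refine le_trans (cnt_patch 2 (m-1) m (by omega)) ?_
    split_ifs <;> omega

lemma rcnt_row1 (n m x : ℕ) :
    ((Finset.range m).filter (fun y => Pn n m x y)).card ≤ m := by
  exact le_trans (Finset.card_filter_le _ _) (by simp)

lemma rcnt_rowB (n m x : ℕ) (hm : 3 ≤ m) (h2 : n % 4 = 2 ∧ (x = n - 1 ∨ x = n - 2)) :
    ((Finset.range m).filter (fun y => Pn n m x y)).card ≤ 2 * ((m + 3) / 4) := by
  have hcg : ∀ y : ℕ, Pn n m x y ↔
      (y % 4 = 0 ∨ (y % 4 = 2 ∨ (m % 4 = 2 ∧ y = m - 1))) := by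
    intro y; unfold Pn; rw [if_neg (by omega), if_neg (by omega), if_pos h2]
  rw [Finset.filter_congr (fun y _ => (hcg y))]
  rw [Finset.filter_or]
  refine le_trans (Finset.card_union_le _ _) ?_
  have b1 := cnt_mod4' 0 m (by omega)
  have b2 := cnt_patch 2 (m-1) m (by omega)
  split_ifs at b2 <;> omega

lemma rcnt_row3 (n m x : ℕ) (hm : 3 ≤ m) (h3 : n % 4 = 3 ∧ x = n - 1) :
    ((Finset.range m).filter (fun y => Pn n m x y)).card ≤ 2 * ((m + 3) / 4) := by
  have hcg : ∀ y : ℕ, Pn n m x y ↔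
      (y % 4 = 1 ∨ (y % 4 = 2 ∨ (m % 4 = 2 ∧ y = 0))) := by
    intro y; unfold Pn; rw [if_neg (by omega), if_pos h3]
  rw [Finset.filter_congr (fun y _ => (hcg y))]
  rw [Finset.filter_or]
  refine le_trans (Finset.card_union_le _ _) ?_
  have b1 := cnt_mod4' 1 m (by omega)
  have b2 := cnt_patch 2 0 m (by omega)
  split_ifs at b2 <;> omega

lemma sum_bound (n m : ℕ) (hn : 3 ≤ n) (hm : 3 ≤ m) :
    (∑ x ∈ Finset.range n, ((Finset.range m).filter (fun y => Pn n m x y)).card) ≤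
      4 * ((n + 3) / 4) * ((m + 3) / 4) := by
  set Q := (m + 3) / 4 with hQ
  have hQm : m ≤ 4 * Q := by omega
  rcases (show n % 4 = 0 ∨ n % 4 = 1 ∨ n % 4 = 2 ∨ n % 4 = 3 by omega) with h | h | h | h
  · -- all regular
    have : ∀ x ∈ Finset.range n, ((Finset.range m).filter (fun y => Pn n m x y)).card ≤ Q :=
      fun x hx => rcnt_reg n m x hm (by omega) (by omega) (by omega)
    refine le_trans (Finset.sum_le_card_nsmul _ _ Q this) ?_
    simp only [Finset.card_range, smul_eq_mul]
    have : 4 * ((n + 3) / 4) = n := by omega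
    rw [this, mul_comm]
  · obtain ⟨k, rfl⟩ : ∃ k, n = k + 1 := ⟨n - 1, by omega⟩
    rw [Finset.sum_range_succ]
    have hreg : ∀ x ∈ Finset.range k,
        ((Finset.range m).filter (fun y => Pn (k+1) m x y)).card ≤ Q := by
      intro x hx
      simp only [Finset.mem_range] at hx
      exact rcnt_reg _ m x hm (by omega) (by omega) (by omega)
    have h1 := Finset.sum_le_card_nsmul _ _ Q hreg
    simp only [Finset.card_range, smul_eq_mul] at h1
    have h2 := rcnt_row1 (k+1) m k
    have hb : 4 * ((k + 1 + 3) / 4) = k + 4 := by omega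
    rw [hb]
    calc _ ≤ k * Q + m := add_le_add h1 h2
    _ ≤ k * Q + 4 * Q := Nat.add_le_add_left hQm _
    _ = (k + 4) * Q := by ring
  · obtain ⟨k, rfl⟩ : ∃ k, n = k + 2 := ⟨n - 2, by omega⟩
    rw [Finset.sum_range_succ, Finset.sum_range_succ]
    have hreg : ∀ x ∈ Finset.range k,
        ((Finset.range m).filter (fun y => Pn (k+2) m x y)).card ≤ Q := by
      intro x hx
      simp only [Finset.mem_range] at hx
      exact rcnt_reg _ m x hm (by omega) (by omega) (by omega)
    have h1 := Finset.sum_le_card_nsmul _ _ Q hreg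
    simp only [Finset.card_range, smul_eq_mul] at h1
    have h2 := rcnt_rowB (k+2) m k hm (by omega)
    have h3 := rcnt_rowB (k+2) m (k+1) hm (by omega)
    have hb : 4 * ((k + 2 + 3) / 4) = k + 4 := by omega
    rw [hb]
    calc _ ≤ k * Q + 2 * Q + 2 * Q := add_le_add (add_le_add h1 h2) h3
    _ = (k + 4) * Q := by ring
  · obtain ⟨k, rfl⟩ : ∃ k, n = k + 1 := ⟨n - 1, by omega⟩
    rw [Finset.sum_range_succ]
    have hreg : ∀ x ∈ Finset.range k,
        ((Finset.range m).filter (fun y => Pn (k+1) m x y)).card ≤ Q := by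
      intro x hx
      simp only [Finset.mem_range] at hx
      exact rcnt_reg _ m x hm (by omega) (by omega) (by omega)
    have h1 := Finset.sum_le_card_nsmul _ _ Q hreg
    simp only [Finset.card_range, smul_eq_mul] at h1
    have h2 := rcnt_row3 (k+1) m k hm (by omega)
    have hb : 4 * ((k + 1 + 3) / 4) = k + 2 := by omega
    rw [hb]
    calc _ ≤ k * Q + 2 * Q := add_le_add h1 h2
    _ = (k + 2) * Q := by ring

lemma succw_lt (k y : ℕ) (hk : 0 < k) (hy : y < k) : succw k y < k := by
  unfold succw; split_ifs <;> omega

lemma cast_succw (k y : ℕ) (hk : 0 < k) (hy : y < k) :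
    ((succw k y : ℕ) : ZMod k) = (y : ZMod k) + 1 := by
  unfold succw
  split_ifs with h
  · have h1 : ((y : ZMod k) + 1) = ((y + 1 : ℕ) : ZMod k) := by push_cast; ring
    rw [h1, h, ZMod.natCast_self, Nat.cast_zero]
  · push_cast; ring

lemma cast_inj_lt (k a b : ℕ) (hk : 0 < k) (ha : a < k) (hb : b < k)
    (h : (a : ZMod k) = b) : a = b := by
  haveI : NeZero k := ⟨by omega⟩
  have := congrArg ZMod.val h
  rwa [ZMod.val_cast_of_lt ha, ZMod.val_cast_of_lt hb] at this

lemma adj_bridge (n m : ℕ) (hn : 3 ≤ n) (hm : 3 ≤ m) (x y x' y' : ℕ)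
    (hx : x < n) (hy : y < m) (hx' : x' < n) (hy' : y' < m)
    (hne : ¬(x' = x ∧ y' = y))
    (hrel : (x' = x ∧ (y' = succw m y ∨ y = succw m y')) ∨
      (y' = y ∧ (x' = succw n x ∨ x = succw n x'))) :
    (torusGraph n m).Adj ((x : ZMod n), (y : ZMod m)) ((x' : ZMod n), (y' : ZMod m)) := by
  constructor
  · intro heq
    rw [Prod.mk.injEq] at heq
    exact hne ⟨(cast_inj_lt n x' x (by omega) hx' hx heq.1.symm),
      (cast_inj_lt m y' y (by omega) hy' hy heq.2.symm)⟩
  · rcases hrel with ⟨hxx, hrel⟩ | ⟨hyy, hrel⟩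
    · subst hxx
      refine Or.inl ⟨rfl, ?_⟩
      rcases hrel with h | h
      · right; rw [h, cast_succw m y (by omega) hy]
      · left; rw [h, cast_succw m y' (by omega) hy']
    · subst hyy
      refine Or.inr ⟨rfl, ?_⟩
      rcases hrel with h | h
      · right; rw [h, cast_succw n x (by omega) hx]
      · left; rw [h, cast_succw n x' (by omega) hx']

lemma card_bridge (n m : ℕ) (hn : 3 ≤ n) (hm : 3 ≤ m) (p : ℕ → ℕ → Prop)
    [∀ x y, Decidable (p x y)] :
    haveI : NeZero n := ⟨by omega⟩
    haveI : NeZero m := ⟨by omega⟩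
    (Finset.univ.filter (fun v : ZMod n × ZMod m => p v.1.val v.2.val)).card =
      ∑ x ∈ Finset.range n, ((Finset.range m).filter (fun y => p x y)).card := by
  haveI : NeZero n := ⟨by omega⟩
  haveI : NeZero m := ⟨by omega⟩
  rw [Finset.card_eq_sum_card_fiberwise
    (f := fun v : ZMod n × ZMod m => v.1.val) (t := Finset.range n)
    (fun v _ => Finset.mem_range.2 (ZMod.val_lt v.1))]
  refine Finset.sum_congr rfl (fun a ha => ?_)
  rw [Finset.mem_range] at ha
  refine Finset.card_bij' (fun v _ => v.2.val) (fun y hy => ((a : ZMod n), (y : ZMod m)))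
    ?_ ?_ ?_ ?_
  · intro v hv
    simp only [Finset.mem_filter, Finset.mem_univ, true_and] at hv
    simp only [Finset.mem_filter, Finset.mem_range]
    exact ⟨ZMod.val_lt v.2, hv.2 ▸ hv.1⟩
  · intro y hy
    simp only [Finset.mem_filter, Finset.mem_range] at hy
    simp only [Finset.mem_filter, Finset.mem_univ, true_and]
    rw [ZMod.val_cast_of_lt ha, ZMod.val_cast_of_lt hy.1]
    exact ⟨hy.2, rfl⟩
  · intro v hv
    simp only [Finset.mem_filter, Finset.mem_univ, true_and] at hv
    have h1 : ((v.2.val : ℕ) : ZMod m) = v.2 := ZMod.natCast_rightInverse v.2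
    have h2 : ((a : ℕ) : ZMod n) = v.1 := by rw [← hv.2]; exact ZMod.natCast_rightInverse v.1
    rw [Prod.ext_iff]; exact ⟨h2, h1⟩
  · intro y hy
    simp only [Finset.mem_filter, Finset.mem_range] at hy
    exact ZMod.val_cast_of_lt hy.1

theorem stmt13 (n m : ℕ) (hn : 3 ≤ n) (hm : 3 ≤ m) :
    pairedDomNum (torusGraph n m) ≤ 4 * ((n + 3) / 4) * ((m + 3) / 4) := by
  haveI : NeZero n := ⟨by omega⟩
  haveI : NeZero m := ⟨by omega⟩
  classical
  set D : Set (ZMod n × ZMod m) := {v | Pn n m v.1.val v.2.val} with hDdef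
  have hmem : ∀ v : ZMod n × ZMod m, v ∈ D ↔ Pn n m v.1.val v.2.val := fun v => Iff.rfl
  have hcv1 : ∀ a : ZMod n, ((a.val : ℕ) : ZMod n) = a := fun a => ZMod.natCast_rightInverse a
  have hcv2 : ∀ a : ZMod m, ((a.val : ℕ) : ZMod m) = a := fun a => ZMod.natCast_rightInverse a
  -- domination
  have hdom : IsDomSet (torusGraph n m) D := by
    intro v hv
    obtain ⟨x', y', hx', hy', hP, hrel⟩ :=
      dom_nat n m v.1.val v.2.val hn hm (ZMod.val_lt v.1) (ZMod.val_lt v.2) hv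
    refine ⟨((x' : ZMod n), (y' : ZMod m)), ?_, ?_⟩
    · show Pn n m ((x' : ZMod n)).val ((y' : ZMod m)).val
      rwa [ZMod.val_cast_of_lt hx', ZMod.val_cast_of_lt hy']
    · have hne : ¬(x' = v.1.val ∧ y' = v.2.val) := by
        rintro ⟨h1, h2⟩
        exact hv (by rwa [h1, h2] at hP)
      have := adj_bridge n m hn hm v.1.val v.2.val x' y'
        (ZMod.val_lt v.1) (ZMod.val_lt v.2) hx' hy' hne hrel
      rwa [hcv1 v.1, hcv2 v.2, Prod.mk.eta] at this
  -- the matching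
  have hmatch : ∃ M : ((torusGraph n m).induce D).Subgraph, M.IsPerfectMatching := by
    have spec : ∀ a : ZMod n × ZMod m, a ∈ D → _ := fun a ha =>
      pa_spec n m a.1.val a.2.val hn hm (ZMod.val_lt a.1) (ZMod.val_lt a.2) ha
    let f : ↥D → ↥D := fun a =>
      ⟨((pax n a.1.1.val : ZMod n), (pay n m a.1.1.val a.1.2.val : ZMod m)), by
        have h := spec a.1 a.2
        show Pn n m _ _
        rw [ZMod.val_cast_of_lt h.2.1, ZMod.val_cast_of_lt h.2.2.1]
        exact h.1⟩
    have hval1 : ∀ a : ↥D, (f a).1.1.val = pax n a.1.1.val := fun a =>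
      ZMod.val_cast_of_lt (spec a.1 a.2).2.1
    have hval2 : ∀ a : ↥D, (f a).1.2.val = pay n m a.1.1.val a.1.2.val := fun a =>
      ZMod.val_cast_of_lt (spec a.1 a.2).2.2.1
    have hinv : ∀ a : ↥D, f (f a) = a := by
      intro a
      have h := spec a.1 a.2
      apply Subtype.ext
      show ((pax n (f a).1.1.val : ZMod n), (pay n m (f a).1.1.val (f a).1.2.val : ZMod m))
        = a.1
      rw [hval1 a, hval2 a, h.2.2.2.2.1, h.2.2.2.2.2.1, hcv1 a.1.1, hcv2 a.1.2, Prod.mk.eta]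
    have hadj : ∀ a : ↥D, ((torusGraph n m).induce D).Adj a (f a) := by
      intro a
      have h := spec a.1 a.2
      show (torusGraph n m).Adj a.1 (f a).1
      have hb := adj_bridge n m hn hm a.1.1.val a.1.2.val
        (pax n a.1.1.val) (pay n m a.1.1.val a.1.2.val)
        (ZMod.val_lt a.1.1) (ZMod.val_lt a.1.2) h.2.1 h.2.2.1 h.2.2.2.1
        h.2.2.2.2.2.2
      rwa [hcv1 a.1.1, hcv2 a.1.2, Prod.mk.eta] at hb
    refine ⟨{ verts := Set.univ
              Adj := fun a b => ((torusGraph n m).induce D).Adj a b ∧ (f a = b ∨ f b = a)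
              adj_sub := fun h => h.1
              edge_vert := fun _ => trivial
              symm := ⟨fun a b h => ⟨h.1.symm, h.2.symm⟩⟩ }, ?_, fun v => trivial⟩
    · intro v _
      refine ⟨f v, ⟨hadj v, Or.inl rfl⟩, ?_⟩
      intro w hw
      rcases hw.2 with h | h
      · exact h.symm
      · rw [← h, hinv w]
  -- cardinality
  have hcard : D.ncard ≤ 4 * ((n + 3) / 4) * ((m + 3) / 4) := by
    have hDF : D = ↑(Finset.univ.filter (fun v : ZMod n × ZMod m => Pn n m v.1.val v.2.val)) := by
      ext v; simp [hDdef]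
    rw [hDF, Set.ncard_coe_finset, card_bridge n m hn hm (Pn n m)]
    exact sum_bound n m hn hm
  exact le_trans (Nat.sInf_le ⟨D, ⟨hdom, hmatch⟩, rfl⟩) hcard
end

section
/- For m ≡ 0 (mod 4) and n ≡ 1 (mod 4) with n, m ≥ 5, the paired domination number of C_n × C_m is at most (n+1)m/4. -/
open SimpleGraph

section Aux

lemma card_mod4 (c : ℕ) (hc : c < 4) (N : ℕ) :
    ((Finset.range N).filter (fun x => x % 4 = c)).card = (N + 3 - c) / 4 := by
  induction N with
  | zero => simp; omega
  | succ N ih =>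
    rw [Finset.range_add_one, Finset.filter_insert]
    by_cases h : N % 4 = c
    · rw [if_pos h, Finset.card_insert_of_notMem (by simp), ih]
      omega
    · rw [if_neg h, ih]; omega

lemma card_mod2 (c : ℕ) (hc : c < 2) (N : ℕ) :
    ((Finset.range N).filter (fun x => x % 2 = c)).card = (N + 1 - c) / 2 := by
  induction N with
  | zero => simp; omega
  | succ N ih =>
    rw [Finset.range_add_one, Finset.filter_insert]
    by_cases h : N % 2 = c
    · rw [if_pos h, Finset.card_insert_of_notMem (by simp), ih]
      omega
    · rw [if_neg h, ih]; omega

lemma card_zmod {N : ℕ} [NeZero N] (p : ℕ → Prop) [DecidablePred p] :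
    (Finset.univ.filter (fun x : ZMod N => p x.val)).card
      = ((Finset.range N).filter p).card := by
  refine Finset.card_nbij' (fun x => x.val) (fun x => (x : ZMod N)) ?_ ?_ ?_ ?_
  · intro a ha
    simp only [Finset.mem_coe, Finset.mem_filter, Finset.mem_range] at *
    exact ⟨a.val_lt, ha.2⟩
  · intro a ha
    simp only [Finset.mem_coe, Finset.mem_filter, Finset.mem_range] at *
    rw [ZMod.val_cast_of_lt ha.1]
    exact ⟨Finset.mem_univ _, ha.2⟩
  · intro a _; exact ZMod.natCast_rightInverse a
  · intro a ha
    simp only [Finset.mem_coe, Finset.mem_filter, Finset.mem_range] at ha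
    exact ZMod.val_cast_of_lt ha.1

lemma zmod_step4 {m : ℕ} [NeZero m] (hm4 : 4 ∣ m) (hm : 1 < m) (j : ZMod m) :
    (j + 1).val % 4 = (j.val + 1) % 4 := by
  haveI : Fact (1 < m) := ⟨hm⟩
  rw [ZMod.val_add, ZMod.val_one, Nat.mod_mod_of_dvd _ hm4]

lemma zmod_step4' {m : ℕ} [NeZero m] (hm4 : 4 ∣ m) (hm : 1 < m) (j : ZMod m) :
    (j - 1).val % 4 = (j.val + 3) % 4 := by
  have h := zmod_step4 hm4 hm (j - 1)
  rw [sub_add_cancel] at h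
  have h1 : (j - 1).val % 4 < 4 := Nat.mod_lt _ (by norm_num)
  have h2 : j.val % 4 < 4 := Nat.mod_lt _ (by norm_num)
  omega

lemma zmod_ne_add_one {N : ℕ} (hN : 1 < N) (x : ZMod N) : x ≠ x + 1 := by
  haveI : NeZero N := ⟨by omega⟩
  haveI : Fact (1 < N) := ⟨hN⟩
  intro h
  have h2 : (x + 1).val = x.val := (congrArg ZMod.val h).symm
  rw [ZMod.val_add, ZMod.val_one] at h2
  have hlt := x.val_lt
  rcases Nat.lt_or_ge (x.val + 1) N with hlt2 | hge
  · rw [Nat.mod_eq_of_lt hlt2] at h2; omega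
  · rw [show x.val + 1 = N by omega, Nat.mod_self] at h2; omega

lemma zmod_val_add_one {N : ℕ} (hN : 1 < N) (x : ZMod N) (h : x.val + 1 < N) :
    (x + 1).val = x.val + 1 := by
  haveI : NeZero N := ⟨by omega⟩
  haveI : Fact (1 < N) := ⟨hN⟩
  rw [ZMod.val_add_of_lt (by rw [ZMod.val_one]; exact h)]
  rw [ZMod.val_one]

lemma zmod_val_sub_one {N : ℕ} [NeZero N] (x : ZMod N) (hx : x.val ≠ 0) :
    (x - 1).val = x.val - 1 := by
  have hlt := x.val_lt
  have hcast : ((x.val : ℕ) : ZMod N) = x := ZMod.natCast_rightInverse x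
  calc (x - 1).val = (((x.val : ℕ) : ZMod N) - 1).val := by rw [hcast]
    _ = (((x.val - 1 : ℕ) : ZMod N)).val := by
        rw [Nat.cast_sub (by omega), Nat.cast_one]
    _ = x.val - 1 := ZMod.val_cast_of_lt (by omega)

end Aux

/-- The paired dominating set used for `C_n × C_m`, `n ≡ 1 (mod 4)`, `m ≡ 0 (mod 4)`. -/
def torusD (n m : ℕ) : Set (ZMod n × ZMod m) :=
  {v | v.1.val % 2 = 0 ∧ (v.2.val % 4 = v.1.val % 4 ∨ v.2.val % 4 = v.1.val % 4 + 1)}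

lemma torusD_mem {n m : ℕ} (v : ZMod n × ZMod m) :
    v ∈ torusD n m ↔ v.1.val % 2 = 0 ∧
      (v.2.val % 4 = v.1.val % 4 ∨ v.2.val % 4 = v.1.val % 4 + 1) := Iff.rfl

lemma torusD_ncard (n m : ℕ) (hn : 5 ≤ n) (hm : 5 ≤ m) (h1 : m % 4 = 0) (h2 : n % 4 = 1) :
    (torusD n m).ncard = (n + 1) * m / 4 := by
  haveI : NeZero n := ⟨by omega⟩
  haveI : NeZero m := ⟨by omega⟩
  have hm4 : 4 ∣ m := Nat.dvd_of_mod_eq_zero h1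
  have hset : torusD n m = ↑(Finset.univ.filter (fun v : ZMod n × ZMod m =>
      v.1.val % 2 = 0 ∧ (v.2.val % 4 = v.1.val % 4 ∨ v.2.val % 4 = v.1.val % 4 + 1))) := by
    ext v; simp [torusD]
  rw [hset, Set.ncard_coe_finset]
  rw [Finset.card_eq_sum_card_fiberwise (f := Prod.fst) (t := Finset.univ)
    (fun x _ => Finset.mem_univ _)]
  have hfib : ∀ i : ZMod n,
      (Finset.filter (fun a : ZMod n × ZMod m => a.1 = i)
        (Finset.univ.filter (fun v : ZMod n × ZMod m =>
          v.1.val % 2 = 0 ∧ (v.2.val % 4 = v.1.val % 4 ∨ v.2.val % 4 = v.1.val % 4 + 1)))).card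
        = if i.val % 2 = 0 then m / 2 else 0 := by
    intro i
    have hbij : (Finset.filter (fun a : ZMod n × ZMod m => a.1 = i)
        (Finset.univ.filter (fun v : ZMod n × ZMod m =>
          v.1.val % 2 = 0 ∧ (v.2.val % 4 = v.1.val % 4 ∨ v.2.val % 4 = v.1.val % 4 + 1)))).card
        = (Finset.univ.filter (fun j : ZMod m =>
            i.val % 2 = 0 ∧ (j.val % 4 = i.val % 4 ∨ j.val % 4 = i.val % 4 + 1))).card := by
      refine Finset.card_nbij' (fun a => a.2) (fun j => (i, j)) ?_ ?_ ?_ ?_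
      · rintro ⟨a1, a2⟩ ha
        simp only [Finset.mem_coe, Finset.mem_filter, Finset.mem_univ, true_and] at *
        obtain ⟨⟨hx, hy⟩, rfl⟩ := ha
        exact ⟨hx, hy⟩
      · intro j hj
        simp only [Finset.mem_coe, Finset.mem_filter, Finset.mem_univ, true_and] at hj
        refine Finset.mem_filter.2 ⟨Finset.mem_filter.2 ⟨Finset.mem_univ _, hj⟩, rfl⟩
      · rintro ⟨a1, a2⟩ ha
        simp only [Finset.mem_coe, Finset.mem_filter] at ha
        rw [ha.2]
      · intro j _; rfl
    rw [hbij]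
    by_cases he : i.val % 2 = 0
    · rw [if_pos he]
      have : (Finset.univ.filter (fun j : ZMod m =>
          i.val % 2 = 0 ∧ (j.val % 4 = i.val % 4 ∨ j.val % 4 = i.val % 4 + 1)))
          = (Finset.univ.filter (fun j : ZMod m =>
            (fun x => x % 4 = i.val % 4 ∨ x % 4 = i.val % 4 + 1) j.val)) := by
        ext j; simp [he]
      rw [this, card_zmod (p := fun x => x % 4 = i.val % 4 ∨ x % 4 = i.val % 4 + 1)]
      rw [Finset.filter_or, Finset.card_union_of_disjoint (by
        simp only [Finset.disjoint_left, Finset.mem_filter, Finset.mem_range]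
        rintro a ⟨-, h⟩ ⟨-, h'⟩; omega)]
      have hc4 : i.val % 4 < 4 := Nat.mod_lt _ (by norm_num)
      have hc2 : i.val % 4 % 2 = 0 := by omega
      rw [card_mod4 _ (by omega), card_mod4 _ (by omega)]
      omega
    · rw [if_neg he]
      rw [Finset.card_eq_zero, Finset.filter_eq_empty_iff]
      intro j _
      simp [he]
  rw [Finset.sum_congr rfl (fun i _ => hfib i)]
  rw [Finset.sum_ite, Finset.sum_const, Finset.sum_const]
  simp only [smul_eq_mul, mul_zero, add_zero, Nat.smul_one_eq_cast]
  have hcount : (Finset.univ.filter (fun i : ZMod n => i.val % 2 = 0)).card = (n + 1) / 2 := by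
    rw [card_zmod (p := fun x => x % 2 = 0), card_mod2 0 (by norm_num)]
    omega
  rw [hcount]
  obtain ⟨k, hk⟩ : ∃ k, n = 4 * k + 1 := ⟨n / 4, by omega⟩
  obtain ⟨l, hl⟩ : ∃ l, m = 4 * l := ⟨m / 4, by omega⟩
  subst hk hl
  have e1 : (4 * k + 1 + 1) / 2 = 2 * k + 1 := by omega
  have e2 : 4 * l / 2 = 2 * l := by omega
  have e3 : (4 * k + 1 + 1) * (4 * l) = 4 * ((2 * k + 1) * (2 * l)) := by ring
  rw [e1, e2, e3, Nat.mul_div_cancel_left _ (by norm_num)]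


/-- The matching relation on `torusD`. -/
def torusR (n m : ℕ) (a b : ↥(torusD n m)) : Prop :=
  (a : ZMod n × ZMod m).1 = (b : ZMod n × ZMod m).1 ∧
    (((b : ZMod n × ZMod m).2 = (a : ZMod n × ZMod m).2 + 1 ∧
        (a : ZMod n × ZMod m).2.val % 4 = (a : ZMod n × ZMod m).1.val % 4) ∨
      ((a : ZMod n × ZMod m).2 = (b : ZMod n × ZMod m).2 + 1 ∧
        (b : ZMod n × ZMod m).2.val % 4 = (b : ZMod n × ZMod m).1.val % 4))

def torusM (n m : ℕ) (hn : 5 ≤ n) (hm : 5 ≤ m) :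
    ((torusGraph n m).induce (torusD n m)).Subgraph where
  verts := Set.univ
  Adj := torusR n m
  adj_sub := by
    have hm1 : (1 : ℕ) < m := by omega
    rintro ⟨⟨i, j⟩, hvD⟩ ⟨⟨i', j'⟩, hwD⟩ ⟨hrow, hor⟩
    simp only [torusR] at hrow hor
    show (torusGraph n m).Adj (i, j) (i', j')
    refine ⟨?_, Or.inl ⟨hrow, ?_⟩⟩
    · intro hne
      rw [Prod.mk.injEq] at hne
      rcases hor with ⟨hcol, -⟩ | ⟨hcol, -⟩
      · exact zmod_ne_add_one hm1 j (hne.2 ▸ hcol)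
      · exact zmod_ne_add_one hm1 j' (hne.2 ▸ hcol)
    · rcases hor with ⟨hcol, -⟩ | ⟨hcol, -⟩
      · exact Or.inr hcol
      · exact Or.inl hcol
  edge_vert _ := Set.mem_univ _
  symm := by
    constructor
    rintro a b ⟨hr, h2⟩
    exact ⟨hr.symm, h2.symm⟩

lemma torusM_isPerfectMatching (n m : ℕ) (hn : 5 ≤ n) (hm : 5 ≤ m)
    (h1 : m % 4 = 0) : (torusM n m hn hm).IsPerfectMatching := by
  haveI : NeZero m := ⟨by omega⟩
  have hm1 : (1 : ℕ) < m := by omega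
  have hm4 : 4 ∣ m := Nat.dvd_of_mod_eq_zero h1
  rw [SimpleGraph.Subgraph.isPerfectMatching_iff]
  rintro ⟨⟨i, j⟩, hvD⟩
  obtain ⟨heven, hor⟩ := (torusD_mem _).1 hvD
  simp only at heven hor
  have hc4 : i.val % 4 < 4 := Nat.mod_lt _ (by norm_num)
  have hc2 : i.val % 4 % 2 = 0 := by omega
  rcases hor with hc | hc1
  · -- partner is (i, j+1)
    have hmem : (i, j + 1) ∈ torusD n m := by
      refine (torusD_mem _).2 ⟨heven, Or.inr ?_⟩
      show (j + 1).val % 4 = i.val % 4 + 1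
      have hstep := zmod_step4 hm4 hm1 j
      omega
    refine ⟨⟨(i, j + 1), hmem⟩, ⟨rfl, Or.inl ⟨rfl, hc⟩⟩, ?_⟩
    rintro ⟨⟨i', j'⟩, hw'⟩ ⟨hrow, hor2⟩
    simp only [torusR] at hrow hor2
    rcases hor2 with ⟨hcol, -⟩ | ⟨hcol, hcc⟩
    · exact Subtype.ext (Prod.ext hrow.symm hcol)
    · exfalso
      have hstep := zmod_step4 hm4 hm1 j'
      rw [← hcol] at hstep
      rw [← hrow] at hcc
      omega
  · -- partner is (i, j-1)
    have hj4 : j.val % 4 < 4 := Nat.mod_lt _ (by norm_num)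
    have hstep' := zmod_step4' hm4 hm1 j
    have hmem : (i, j - 1) ∈ torusD n m := by
      refine (torusD_mem _).2 ⟨heven, Or.inl ?_⟩
      show (j - 1).val % 4 = i.val % 4
      omega
    refine ⟨⟨(i, j - 1), hmem⟩,
      ⟨rfl, Or.inr ⟨(sub_add_cancel j 1).symm, by simp only; omega⟩⟩, ?_⟩
    rintro ⟨⟨i', j'⟩, hw'⟩ ⟨hrow, hor2⟩
    simp only [torusR] at hrow hor2
    rcases hor2 with ⟨hcol, hcc⟩ | ⟨hcol, -⟩
    · exfalso; omega
    · refine Subtype.ext (Prod.ext hrow.symm ?_)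
      exact eq_sub_of_add_eq hcol.symm

theorem stmt14 (n m : ℕ) (hn : 5 ≤ n) (hm : 5 ≤ m) (h1 : m % 4 = 0) (h2 : n % 4 = 1) :
    pairedDomNum (torusGraph n m) ≤ (n + 1) * m / 4 := by
  haveI : NeZero n := ⟨by omega⟩
  haveI : NeZero m := ⟨by omega⟩
  have hm1 : (1:ℕ) < m := by omega
  have hn1 : (1:ℕ) < n := by omega
  have hm4 : 4 ∣ m := Nat.dvd_of_mod_eq_zero h1
  apply Nat.sInf_le
  refine ⟨torusD n m, ⟨?_, ?_⟩, torusD_ncard n m hn hm h1 h2⟩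
  · -- domination
    rintro ⟨i, j⟩ hv
    have hjm := j.val_lt
    have him := i.val_lt
    by_cases he : i.val % 2 = 0
    · -- even row, use a horizontal neighbour
      have hB : ¬(j.val % 4 = i.val % 4 ∨ j.val % 4 = i.val % 4 + 1) :=
        fun hOr => hv ⟨he, hOr⟩
      push_neg at hB
      have hc4 : i.val % 4 < 4 := Nat.mod_lt _ (by norm_num)
      have hj4 : j.val % 4 < 4 := Nat.mod_lt _ (by norm_num)
      by_cases hj : j.val % 4 = (i.val % 4 + 2) % 4
      · refine ⟨(i, j - 1), ?_, ?_⟩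
        · refine (torusD_mem _).2 ⟨he, Or.inr ?_⟩
          show (j - 1).val % 4 = i.val % 4 + 1
          have hstep := zmod_step4' hm4 hm1 j
          omega
        · refine ⟨?_, Or.inl ⟨rfl, Or.inl (sub_add_cancel j 1).symm⟩⟩
          intro h
          have h2 := congrArg Prod.snd h
          simp only at h2
          exact zmod_ne_add_one hm1 (j - 1) (by rw [sub_add_cancel]; exact h2.symm)
      · refine ⟨(i, j + 1), ?_, ?_⟩
        · refine (torusD_mem _).2 ⟨he, Or.inl ?_⟩
          show (j + 1).val % 4 = i.val % 4
          have hstep := zmod_step4 hm4 hm1 j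
          omega
        · refine ⟨?_, Or.inl ⟨rfl, Or.inr rfl⟩⟩
          intro h
          have h2 := congrArg Prod.snd h
          simp only at h2
          exact zmod_ne_add_one hm1 j h2
    · -- odd row, use a vertical neighbour
      have ho : i.val % 2 = 1 := by omega
      have hi2 : i.val + 1 < n := by omega
      have hi1 : 1 ≤ i.val := by omega
      have hup : (i + 1).val = i.val + 1 := zmod_val_add_one hn1 i hi2
      have hdn : (i - 1).val = i.val - 1 := zmod_val_sub_one i (by omega)
      by_cases hj : j.val % 4 = (i.val + 1) % 4 ∨ j.val % 4 = (i.val + 1) % 4 + 1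
      · refine ⟨(i + 1, j), ?_, ?_⟩
        · refine (torusD_mem _).2 ⟨?_, ?_⟩
          · show (i + 1).val % 2 = 0
            rw [hup]; omega
          · show j.val % 4 = (i + 1).val % 4 ∨ j.val % 4 = (i + 1).val % 4 + 1
            rw [hup]; exact hj
        · refine ⟨?_, Or.inr ⟨rfl, Or.inr rfl⟩⟩
          intro h
          have h2 := congrArg Prod.fst h
          simp only at h2
          exact zmod_ne_add_one hn1 i h2
      · push_neg at hj
        refine ⟨(i - 1, j), ?_, ?_⟩
        · refine (torusD_mem _).2 ⟨?_, ?_⟩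
          · show (i - 1).val % 2 = 0
            rw [hdn]; omega
          · show j.val % 4 = (i - 1).val % 4 ∨ j.val % 4 = (i - 1).val % 4 + 1
            rw [hdn]
            have hj4 : j.val % 4 < 4 := Nat.mod_lt _ (by norm_num)
            omega
        · refine ⟨?_, Or.inr ⟨rfl, Or.inl (sub_add_cancel i 1).symm⟩⟩
          intro h
          have h2 := congrArg Prod.fst h
          simp only at h2
          exact zmod_ne_add_one hn1 (i - 1) (by rw [sub_add_cancel]; exact h2.symm)
  · -- perfect matching
    exact ⟨torusM n m hn hm, torusM_isPerfectMatching n m hn hm h1⟩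
end

section
/- For m ≡ 2 (mod 4) and n ≡ 2 (mod 4) with n, m ≥ 6, the paired domination number of C_n × C_m is at most (n+2)(m+2)/4 − 6. -/
open SimpleGraph

open Finset

/-- vertex of the torus given by natural number coordinates -/
def vtx (a b : ℕ) (p q : ℕ) : ZMod (4*a+2) × ZMod (4*b+2) :=
  ((p : ZMod (4*a+2)), (q : ZMod (4*b+2)))

/-- the paired dominating set -/
def pat (a b : ℕ) : Finset (ZMod (4*a+2) × ZMod (4*b+2)) :=
  ((range (a-1) ×ˢ range (b+1) ×ˢ range 2).image
      (fun x => vtx a b (4*x.1+4) (4*x.2.1+x.2.2))) ∪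
  ((range a ×ˢ range b ×ˢ range 2).image
      (fun x => vtx a b (4*x.1+2) (4*x.2.1+2+x.2.2))) ∪
  ((range a ×ˢ range 2).image (fun x => vtx a b (4*x.1+2) (4*b+x.2))) ∪
  ((range b ×ˢ range 2).image (fun x => vtx a b (4*a) (4*x.1+x.2))) ∪
  ((range (4*b-2)).image (fun q => vtx a b 0 q)) ∪
  ((range 2).image (fun t => vtx a b (4*a+1) (4*b-1+t)))

section mems
variable {a b : ℕ} (ha : 1 ≤ a) (hb : 1 ≤ b)

lemma memA0 {c q : ℕ} (hc : c % 4 = 0) (hc1 : 4 ≤ c) (hc2 : c + 4 ≤ 4*a)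
    (hq : q ≤ 4*b+1) (hq4 : q % 4 ≤ 1) : vtx a b c q ∈ pat a b := by
  refine Finset.mem_union_left _ (Finset.mem_union_left _ (Finset.mem_union_left _
    (Finset.mem_union_left _ (Finset.mem_union_left _ ?_))))
  refine Finset.mem_image.mpr ⟨((c-4)/4, (q/4, q%4)), ?_, ?_⟩
  · simp only [Finset.mem_product, Finset.mem_range]; omega
  · have e1 : 4*((c-4)/4)+4 = c := by omega
    have e2 : 4*(q/4)+q%4 = q := by omega
    rw [e1, e2]

lemma memA2 {c q : ℕ} (hc : c % 4 = 2) (hc1 : 2 ≤ c) (hc2 : c + 2 ≤ 4*a)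
    (hq : q ≤ 4*b+1) (hq4 : 2 ≤ q % 4 ∨ 4*b ≤ q) : vtx a b c q ∈ pat a b := by
  rcases le_or_gt (4*b) q with h | h
  · refine Finset.mem_union_left _ (Finset.mem_union_left _ (Finset.mem_union_left _
      (Finset.mem_union_right _ ?_)))
    refine Finset.mem_image.mpr ⟨((c-2)/4, q - 4*b), ?_, ?_⟩
    · simp only [Finset.mem_product, Finset.mem_range]; omega
    · have e1 : 4*((c-2)/4)+2 = c := by omega
      have e2 : 4*b + (q - 4*b) = q := by omega
      rw [e1, e2]
  · have hq2 : 2 ≤ q % 4 := by omega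
    refine Finset.mem_union_left _ (Finset.mem_union_left _ (Finset.mem_union_left _
      (Finset.mem_union_left _ (Finset.mem_union_right _ ?_))))
    refine Finset.mem_image.mpr ⟨((c-2)/4, ((q-2)/4, q%4-2)), ?_, ?_⟩
    · simp only [Finset.mem_product, Finset.mem_range]; omega
    · have e1 : 4*((c-2)/4)+2 = c := by omega
      have e2 : 4*((q-2)/4)+2+(q%4-2) = q := by omega
      rw [e1, e2]

lemma memB {q : ℕ} (hq : q + 3 ≤ 4*b) (hq4 : q % 4 ≤ 1) : vtx a b (4*a) q ∈ pat a b := by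
  refine Finset.mem_union_left _ (Finset.mem_union_left _ (Finset.mem_union_right _ ?_))
  refine Finset.mem_image.mpr ⟨(q/4, q%4), ?_, ?_⟩
  · simp only [Finset.mem_product, Finset.mem_range]; omega
  · have e2 : 4*(q/4)+q%4 = q := by omega
    rw [e2]

lemma memC {q : ℕ} (hq : q + 3 ≤ 4*b) : vtx a b 0 q ∈ pat a b := by
  refine Finset.mem_union_left _ (Finset.mem_union_right _ ?_)
  exact Finset.mem_image.mpr ⟨q, Finset.mem_range.mpr (by omega), rfl⟩

lemma memE {q : ℕ} (hq1 : 4*b ≤ q + 1) (hq2 : q ≤ 4*b) : vtx a b (4*a+1) q ∈ pat a b := by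
  refine Finset.mem_union_right _ ?_
  refine Finset.mem_image.mpr ⟨q - (4*b-1), Finset.mem_range.mpr (by omega), ?_⟩
  have e : 4*b-1 + (q - (4*b-1)) = q := by omega
  rw [e]

end mems

section adj
variable {n m : ℕ}

lemma torus_adj_vert (hm : 1 < m) {x : ZMod n} {y y' : ZMod m}
    (h : y' = y + 1 ∨ y = y' + 1) : (torusGraph n m).Adj (x, y) (x, y') := by
  haveI : Fact (1 < m) := ⟨hm⟩
  refine ⟨?_, Or.inl ⟨rfl, h.symm⟩⟩
  intro he
  have hy : y = y' := congrArg Prod.snd he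
  rcases h with h | h
  · rw [hy] at h; exact one_ne_zero (left_eq_add.mp h)
  · rw [hy] at h; exact one_ne_zero (left_eq_add.mp h)

lemma torus_adj_horiz (hn : 1 < n) {x x' : ZMod n} {y : ZMod m}
    (h : x' = x + 1 ∨ x = x' + 1) : (torusGraph n m).Adj (x, y) (x', y) := by
  haveI : Fact (1 < n) := ⟨hn⟩
  refine ⟨?_, Or.inr ⟨rfl, h.symm⟩⟩
  intro he
  have hy : x = x' := congrArg Prod.fst he
  rcases h with h | h
  · rw [hy] at h; exact one_ne_zero (left_eq_add.mp h)
  · rw [hy] at h; exact one_ne_zero (left_eq_add.mp h)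

end adj

lemma cast_succ_nat {M j q : ℕ} (h : q = j + 1 ∨ (j + 1 = M ∧ q = 0)) :
    (q : ZMod M) = (j : ZMod M) + 1 := by
  rcases h with rfl | ⟨h1, rfl⟩
  · push_cast; ring
  · have : ((j : ZMod M) + 1) = ((j+1 : ℕ) : ZMod M) := by push_cast; ring
    rw [this, h1, ZMod.natCast_self, Nat.cast_zero]

lemma adj_vert {a b : ℕ} (i : ℕ) {j q : ℕ}
    (h : q = j+1 ∨ (j+1 = 4*b+2 ∧ q = 0) ∨ j = q+1 ∨ (q+1 = 4*b+2 ∧ j = 0)) :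
    (torusGraph (4*a+2) (4*b+2)).Adj (vtx a b i j) (vtx a b i q) := by
  apply torus_adj_vert (by omega)
  rcases h with h | h | h | h
  · exact Or.inl (cast_succ_nat (Or.inl h))
  · exact Or.inl (cast_succ_nat (Or.inr h))
  · exact Or.inr (cast_succ_nat (Or.inl h))
  · exact Or.inr (cast_succ_nat (Or.inr h))

lemma adj_horiz {a b : ℕ} {i p : ℕ} (j : ℕ)
    (h : p = i+1 ∨ (i+1 = 4*a+2 ∧ p = 0) ∨ i = p+1 ∨ (p+1 = 4*a+2 ∧ i = 0)) :
    (torusGraph (4*a+2) (4*b+2)).Adj (vtx a b i j) (vtx a b p j) := by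
  apply torus_adj_horiz (by omega)
  rcases h with h | h | h | h
  · exact Or.inl (cast_succ_nat (Or.inl h))
  · exact Or.inl (cast_succ_nat (Or.inr h))
  · exact Or.inr (cast_succ_nat (Or.inl h))
  · exact Or.inr (cast_succ_nat (Or.inr h))

lemma pat_dom {a b : ℕ} (ha : 1 ≤ a) (hb : 1 ≤ b) {i j : ℕ}
    (hi : i < 4*a+2) (hj : j < 4*b+2) :
    ∃ u ∈ pat a b, (torusGraph (4*a+2) (4*b+2)).Adj (vtx a b i j) u := by
  rcases Nat.lt_or_ge i 2 with hi2 | hi2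
  · interval_cases i
    · -- i = 0
      by_cases h0 : j = 0
      · subst h0
        exact ⟨vtx a b 0 1, memC (by omega), adj_vert _ (by omega)⟩
      by_cases h1 : j ≤ 4*b-2
      · exact ⟨vtx a b 0 (j-1), memC (by omega), adj_vert _ (by omega)⟩
      by_cases h2 : j ≤ 4*b
      · exact ⟨vtx a b (4*a+1) j, memE (by omega) (by omega), adj_horiz _ (by omega)⟩
      · exact ⟨vtx a b 0 0, memC (by omega), adj_vert _ (by omega)⟩
    · -- i = 1
      by_cases h1 : j + 3 ≤ 4*b
      · exact ⟨vtx a b 0 j, memC (by omega), adj_horiz _ (by omega)⟩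
      · exact ⟨vtx a b 2 j, memA2 (by omega) (by omega) (by omega) (by omega) (by omega),
          adj_horiz _ (by omega)⟩
  · have hup : i = 4*a ∨ i = 4*a+1 ∨ i + 1 = 4*a ∨ i + 2 ≤ 4*a := by omega
    rcases hup with rfl | rfl | hix | hup
    · -- i = 4a
      by_cases h0 : j = 0
      · subst h0
        exact ⟨vtx a b (4*a) 1, memB (by omega) (by omega), adj_vert _ (by omega)⟩
      by_cases hb0 : j = 4*b
      · exact ⟨vtx a b (4*a+1) j, memE (by omega) (by omega), adj_horiz _ (by omega)⟩
      by_cases hb1 : j = 4*b+1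
      · exact ⟨vtx a b (4*a) 0, memB (by omega) (by omega), adj_vert _ (by omega)⟩
      have hj4 : j % 4 = 0 ∨ j % 4 = 1 ∨ j % 4 = 2 ∨ j % 4 = 3 := by omega
      rcases hj4 with h4 | h4 | h4 | h4
      · exact ⟨vtx a b (4*a) (j+1), memB (by omega) (by omega), adj_vert _ (by omega)⟩
      · exact ⟨vtx a b (4*a) (j-1), memB (by omega) (by omega), adj_vert _ (by omega)⟩
      · exact ⟨vtx a b (4*a) (j-1), memB (by omega) (by omega), adj_vert _ (by omega)⟩
      · by_cases hl : j + 1 = 4*b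
        · exact ⟨vtx a b (4*a+1) j, memE (by omega) (by omega), adj_horiz _ (by omega)⟩
        · exact ⟨vtx a b (4*a) (j+1), memB (by omega) (by omega), adj_vert _ (by omega)⟩
    · -- i = 4a+1
      by_cases h1 : j + 3 ≤ 4*b
      · exact ⟨vtx a b 0 j, memC (by omega), adj_horiz _ (by omega)⟩
      by_cases h2 : j + 2 ≤ 4*b
      · exact ⟨vtx a b (4*a+1) (j+1), memE (by omega) (by omega), adj_vert _ (by omega)⟩
      by_cases h3 : j + 1 = 4*b
      · exact ⟨vtx a b (4*a+1) (j+1), memE (by omega) (by omega), adj_vert _ (by omega)⟩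
      · exact ⟨vtx a b (4*a+1) (j-1), memE (by omega) (by omega), adj_vert _ (by omega)⟩
    · -- i = 4a - 1
      by_cases hj4 : 2 ≤ j % 4 ∨ 4*b ≤ j
      · exact ⟨vtx a b (i-1) j,
          memA2 (by omega) (by omega) (by omega) (by omega) (by omega),
          adj_horiz _ (by omega)⟩
      · exact ⟨vtx a b (4*a) j, memB (by omega) (by omega), adj_horiz _ (by omega)⟩
    · -- 2 ≤ i, i + 2 ≤ 4a
      by_cases hpar : i % 2 = 0
      · -- even interior column
        by_cases h42 : i % 4 = 2
        · by_cases h0 : j = 0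
          · exact ⟨vtx a b i (4*b+1),
              memA2 (by omega) (by omega) (by omega) (by omega) (by omega),
              adj_vert _ (by omega)⟩
          by_cases hb1 : j = 4*b+1
          · exact ⟨vtx a b i (4*b),
              memA2 (by omega) (by omega) (by omega) (by omega) (by omega),
              adj_vert _ (by omega)⟩
          have hj4 : j % 4 = 0 ∨ j % 4 = 1 ∨ j % 4 = 2 ∨ j % 4 = 3 := by omega
          rcases hj4 with h4 | h4 | h4 | h4
          · exact ⟨vtx a b i (j-1),
              memA2 (by omega) (by omega) (by omega) (by omega) (by omega),
              adj_vert _ (by omega)⟩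
          · exact ⟨vtx a b i (j+1),
              memA2 (by omega) (by omega) (by omega) (by omega) (by omega),
              adj_vert _ (by omega)⟩
          · exact ⟨vtx a b i (j+1),
              memA2 (by omega) (by omega) (by omega) (by omega) (by omega),
              adj_vert _ (by omega)⟩
          · exact ⟨vtx a b i (j-1),
              memA2 (by omega) (by omega) (by omega) (by omega) (by omega),
              adj_vert _ (by omega)⟩
        · -- i % 4 = 0
          have hj4 : j % 4 = 0 ∨ j % 4 = 1 ∨ j % 4 = 2 ∨ j % 4 = 3 := by omega
          rcases hj4 with h4 | h4 | h4 | h4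
          · exact ⟨vtx a b i (j+1),
              memA0 (by omega) (by omega) (by omega) (by omega) (by omega),
              adj_vert _ (by omega)⟩
          · exact ⟨vtx a b i (j-1),
              memA0 (by omega) (by omega) (by omega) (by omega) (by omega),
              adj_vert _ (by omega)⟩
          · exact ⟨vtx a b i (j-1),
              memA0 (by omega) (by omega) (by omega) (by omega) (by omega),
              adj_vert _ (by omega)⟩
          · exact ⟨vtx a b i (j+1),
              memA0 (by omega) (by omega) (by omega) (by omega) (by omega),
              adj_vert _ (by omega)⟩
      · -- odd interior column, 3 ≤ i ≤ 4a-2 (odd so ≤ 4a-3)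
        by_cases h41 : i % 4 = 1
        · by_cases hj4 : j % 4 ≤ 1
          · exact ⟨vtx a b (i-1) j,
              memA0 (by omega) (by omega) (by omega) (by omega) (by omega),
              adj_horiz _ (by omega)⟩
          · exact ⟨vtx a b (i+1) j,
              memA2 (by omega) (by omega) (by omega) (by omega) (by omega),
              adj_horiz _ (by omega)⟩
        · -- i % 4 = 3
          by_cases hj4 : j % 4 ≤ 1
          · exact ⟨vtx a b (i+1) j,
              memA0 (by omega) (by omega) (by omega) (by omega) (by omega),
              adj_horiz _ (by omega)⟩
          · exact ⟨vtx a b (i-1) j,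
              memA2 (by omega) (by omega) (by omega) (by omega) (by omega),
              adj_horiz _ (by omega)⟩

/-- the partner function pairing up elements of `pat` -/
def partner (a b : ℕ) (v : ZMod (4*a+2) × ZMod (4*b+2)) : ZMod (4*a+2) × ZMod (4*b+2) :=
  if v.1 = ((4*a+1 : ℕ) : ZMod (4*a+2)) then
    (if v.2.val % 2 = 1 then (v.1, v.2 + 1) else (v.1, v.2 - 1))
  else
    (if v.2.val % 2 = 0 then (v.1, v.2 + 1) else (v.1, v.2 - 1))

lemma partner_adj {a b : ℕ} (v : ZMod (4*a+2) × ZMod (4*b+2)) :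
    (torusGraph (4*a+2) (4*b+2)).Adj v (partner a b v) := by
  obtain ⟨x, y⟩ := v
  have h1 : (torusGraph (4*a+2) (4*b+2)).Adj (x, y) (x, y + 1) :=
    torus_adj_vert (by omega) (Or.inl rfl)
  have h2 : (torusGraph (4*a+2) (4*b+2)).Adj (x, y) (x, y - 1) :=
    torus_adj_vert (by omega) (Or.inr (by ring))
  unfold partner
  split_ifs <;> assumption

lemma val_add_one_parity {b : ℕ} (y : ZMod (4*b+2)) :
    (y + 1).val % 2 = (y.val + 1) % 2 := by
  haveI : NeZero (4*b+2) := ⟨by omega⟩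
  haveI : Fact (1 < 4*b+2) := ⟨by omega⟩
  have h1 : (y + 1).val = (y.val + (1 : ZMod (4*b+2)).val) % (4*b+2) := ZMod.val_add y 1
  have h2 : (1 : ZMod (4*b+2)).val = 1 := ZMod.val_one _
  have hy : y.val < 4*b+2 := ZMod.val_lt y
  rw [h1, h2]
  rcases Nat.lt_or_ge (y.val + 1) (4*b+2) with h | h
  · rw [Nat.mod_eq_of_lt h]
  · have he : y.val + 1 = 4*b+2 := by omega
    rw [he, Nat.mod_self]
    omega

lemma val_sub_one_parity {b : ℕ} (y : ZMod (4*b+2)) :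
    (y - 1).val % 2 = (y.val + 1) % 2 := by
  have h := val_add_one_parity (y - 1)
  rw [sub_add_cancel] at h
  haveI : NeZero (4*b+2) := ⟨by omega⟩
  have h1 : (y-1).val < 4*b+2 := ZMod.val_lt _
  have h2 : y.val < 4*b+2 := ZMod.val_lt _
  omega

lemma partner_invol {a b : ℕ} (v : ZMod (4*a+2) × ZMod (4*b+2)) :
    partner a b (partner a b v) = v := by
  obtain ⟨x, y⟩ := v
  by_cases hx : x = ((4*a+1 : ℕ) : ZMod (4*a+2)) <;>
    by_cases hp : y.val % 2 = 1
  · have e1 : partner a b (x, y) = (x, y + 1) := by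
      unfold partner; rw [if_pos hx, if_pos hp]
    have hp2 : ¬ ((y+1).val % 2 = 1) := by
      have := val_add_one_parity y; omega
    have e2 : partner a b (x, y + 1) = (x, y + 1 - 1) := by
      unfold partner; rw [if_pos hx, if_neg hp2]
    rw [e1, e2, add_sub_cancel_right]
  · have e1 : partner a b (x, y) = (x, y - 1) := by
      unfold partner; rw [if_pos hx, if_neg hp]
    have hp2 : ((y-1).val % 2 = 1) := by
      have := val_sub_one_parity y; omega
    have e2 : partner a b (x, y - 1) = (x, y - 1 + 1) := by
      unfold partner; rw [if_pos hx, if_pos hp2]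
    rw [e1, e2, sub_add_cancel]
  · have hp0 : ¬ (y.val % 2 = 0) := by omega
    have e1 : partner a b (x, y) = (x, y - 1) := by
      unfold partner; rw [if_neg hx, if_neg hp0]
    have hp2 : ((y-1).val % 2 = 0) := by
      have := val_sub_one_parity y; omega
    have e2 : partner a b (x, y - 1) = (x, y - 1 + 1) := by
      unfold partner; rw [if_neg hx, if_pos hp2]
    rw [e1, e2, sub_add_cancel]
  · have hp0 : (y.val % 2 = 0) := by omega
    have e1 : partner a b (x, y) = (x, y + 1) := by
      unfold partner; rw [if_neg hx, if_pos hp0]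
    have hp2 : ¬ ((y+1).val % 2 = 0) := by
      have := val_add_one_parity y; omega
    have e2 : partner a b (x, y + 1) = (x, y + 1 - 1) := by
      unfold partner; rw [if_neg hx, if_neg hp2]
    rw [e1, e2, add_sub_cancel_right]

lemma natCast_eq_iff_of_lt {M c d : ℕ} (h1 : c < M) (h2 : d < M) :
    ((c : ZMod M) = (d : ZMod M)) ↔ c = d := by
  rw [ZMod.natCast_eq_natCast_iff, Nat.ModEq, Nat.mod_eq_of_lt h1, Nat.mod_eq_of_lt h2]

lemma partner_vtx_add {a b c q : ℕ} (hc : c < 4*a+2) (hq : q < 4*b+2)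
    (h : (c = 4*a+1 ∧ q % 2 = 1) ∨ (c ≠ 4*a+1 ∧ q % 2 = 0)) :
    partner a b (vtx a b c q) = vtx a b c (q+1) := by
  have hval : ((q : ZMod (4*b+2))).val = q := ZMod.val_cast_of_lt hq
  have hcast : ((c : ZMod (4*a+2)) = ((4*a+1 : ℕ) : ZMod (4*a+2))) ↔ c = 4*a+1 :=
    natCast_eq_iff_of_lt hc (by omega)
  have hgoal : ((q : ZMod (4*b+2)) + 1) = ((q+1 : ℕ) : ZMod (4*b+2)) := by push_cast; ring
  rcases h with ⟨h1, h2⟩ | ⟨h1, h2⟩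
  · show partner a b ((c : ZMod (4*a+2)), (q : ZMod (4*b+2))) = _
    unfold partner
    rw [if_pos (hcast.mpr h1)]
    simp only [hval]
    rw [if_pos h2]
    simp only [vtx, hgoal]
  · show partner a b ((c : ZMod (4*a+2)), (q : ZMod (4*b+2))) = _
    unfold partner
    rw [if_neg (fun hh => h1 (hcast.mp hh))]
    simp only [hval]
    rw [if_pos h2]
    simp only [vtx, hgoal]

lemma partner_vtx_sub {a b c q : ℕ} (hc : c < 4*a+2) (hq : q < 4*b+2) (hq1 : 1 ≤ q)
    (h : (c = 4*a+1 ∧ q % 2 = 0) ∨ (c ≠ 4*a+1 ∧ q % 2 = 1)) :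
    partner a b (vtx a b c q) = vtx a b c (q-1) := by
  have hval : ((q : ZMod (4*b+2))).val = q := ZMod.val_cast_of_lt hq
  have hcast : ((c : ZMod (4*a+2)) = ((4*a+1 : ℕ) : ZMod (4*a+2))) ↔ c = 4*a+1 :=
    natCast_eq_iff_of_lt hc (by omega)
  have hgoal : ((q : ZMod (4*b+2)) - 1) = ((q-1 : ℕ) : ZMod (4*b+2)) := by
    push_cast [hq1]; ring
  rcases h with ⟨h1, h2⟩ | ⟨h1, h2⟩
  · show partner a b ((c : ZMod (4*a+2)), (q : ZMod (4*b+2))) = _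
    unfold partner
    rw [if_pos (hcast.mpr h1)]
    simp only [hval]
    rw [if_neg (by omega : ¬ q % 2 = 1)]
    simp only [vtx, hgoal]
  · show partner a b ((c : ZMod (4*a+2)), (q : ZMod (4*b+2))) = _
    unfold partner
    rw [if_neg (fun hh => h1 (hcast.mp hh))]
    simp only [hval]
    rw [if_neg (by omega : ¬ q % 2 = 0)]
    simp only [vtx, hgoal]

lemma partner_mem {a b : ℕ} (ha : 1 ≤ a) (hb : 1 ≤ b)
    {v : ZMod (4*a+2) × ZMod (4*b+2)} (h : v ∈ pat a b) :
    partner a b v ∈ pat a b := by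
  rcases Finset.mem_union.mp h with h | h
  rcases Finset.mem_union.mp h with h | h
  rcases Finset.mem_union.mp h with h | h
  rcases Finset.mem_union.mp h with h | h
  rcases Finset.mem_union.mp h with h | h
  · -- A0
    obtain ⟨⟨p, k, t⟩, hm, rfl⟩ := Finset.mem_image.mp h
    dsimp only
    simp only [Finset.mem_product, Finset.mem_range] at hm
    obtain ⟨hp, hk, ht⟩ := hm
    have ht2 : t = 0 ∨ t = 1 := by omega
    rcases ht2 with rfl | rfl
    · rw [partner_vtx_add (by omega) (by omega) (by omega)]
      exact memA0 (by omega) (by omega) (by omega) (by omega) (by omega)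
    · rw [partner_vtx_sub (by omega) (by omega) (by omega) (by omega)]
      exact memA0 (by omega) (by omega) (by omega) (by omega) (by omega)
  · -- A2 main
    obtain ⟨⟨p, k, t⟩, hm, rfl⟩ := Finset.mem_image.mp h
    dsimp only
    simp only [Finset.mem_product, Finset.mem_range] at hm
    obtain ⟨hp, hk, ht⟩ := hm
    have ht2 : t = 0 ∨ t = 1 := by omega
    rcases ht2 with rfl | rfl
    · rw [partner_vtx_add (by omega) (by omega) (by omega)]
      exact memA2 (by omega) (by omega) (by omega) (by omega) (by omega)
    · rw [partner_vtx_sub (by omega) (by omega) (by omega) (by omega)]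
      exact memA2 (by omega) (by omega) (by omega) (by omega) (by omega)
  · -- A2 top
    obtain ⟨⟨p, t⟩, hm, rfl⟩ := Finset.mem_image.mp h
    dsimp only
    simp only [Finset.mem_product, Finset.mem_range] at hm
    obtain ⟨hp, ht⟩ := hm
    have ht2 : t = 0 ∨ t = 1 := by omega
    rcases ht2 with rfl | rfl
    · rw [partner_vtx_add (by omega) (by omega) (by omega)]
      exact memA2 (by omega) (by omega) (by omega) (by omega) (by omega)
    · rw [partner_vtx_sub (by omega) (by omega) (by omega) (by omega)]
      exact memA2 (by omega) (by omega) (by omega) (by omega) (by omega)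
  · -- B
    obtain ⟨⟨k, t⟩, hm, rfl⟩ := Finset.mem_image.mp h
    dsimp only
    simp only [Finset.mem_product, Finset.mem_range] at hm
    obtain ⟨hk, ht⟩ := hm
    have ht2 : t = 0 ∨ t = 1 := by omega
    rcases ht2 with rfl | rfl
    · rw [partner_vtx_add (by omega) (by omega) (by omega)]
      exact memB (by omega) (by omega)
    · rw [partner_vtx_sub (by omega) (by omega) (by omega) (by omega)]
      exact memB (by omega) (by omega)
  · -- C
    obtain ⟨q, hm, rfl⟩ := Finset.mem_image.mp h
    rw [Finset.mem_range] at hm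
    have ht2 : q % 2 = 0 ∨ q % 2 = 1 := by omega
    rcases ht2 with hq2 | hq2
    · rw [partner_vtx_add (by omega) (by omega) (by omega)]
      exact memC (by omega)
    · rw [partner_vtx_sub (by omega) (by omega) (by omega) (by omega)]
      exact memC (by omega)
  · -- E
    obtain ⟨t, hm, rfl⟩ := Finset.mem_image.mp h
    rw [Finset.mem_range] at hm
    have ht2 : t = 0 ∨ t = 1 := by omega
    rcases ht2 with rfl | rfl
    · rw [partner_vtx_add (by omega) (by omega) (by omega)]
      exact memE (by omega) (by omega)
    · rw [partner_vtx_sub (by omega) (by omega) (by omega) (by omega)]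
      exact memE (by omega) (by omega)

lemma pat_card {a b : ℕ} (ha : 1 ≤ a) (hb : 1 ≤ b) :
    (pat a b).card + 2 ≤ 4*(a*b)+4*a+4*b := by
  have h1 : (pat a b).card ≤
      (a-1)*((b+1)*2) + a*(b*2) + a*2 + b*2 + (4*b-2) + 2 := by
    unfold pat
    refine le_trans (Finset.card_union_le _ _) ?_
    refine Nat.add_le_add ?_ (le_trans Finset.card_image_le (by simp))
    refine le_trans (Finset.card_union_le _ _) ?_
    refine Nat.add_le_add ?_ (le_trans Finset.card_image_le (by simp))
    refine le_trans (Finset.card_union_le _ _) ?_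
    refine Nat.add_le_add ?_ (le_trans Finset.card_image_le (by simp))
    refine le_trans (Finset.card_union_le _ _) ?_
    refine Nat.add_le_add ?_ (le_trans Finset.card_image_le (by simp))
    refine le_trans (Finset.card_union_le _ _) ?_
    refine Nat.add_le_add ?_ (le_trans Finset.card_image_le (by simp))
    exact le_trans Finset.card_image_le (by simp)
  obtain ⟨a', rfl⟩ : ∃ a', a = a'+1 := ⟨a-1, by omega⟩
  obtain ⟨b', rfl⟩ : ∃ b', b = b'+1 := ⟨b-1, by omega⟩
  have e1 : (a'+1)-1 = a' := by omega
  have e2 : 4*(b'+1)-2 = 4*b'+2 := by omega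
  rw [e1, e2] at h1
  refine le_trans (Nat.add_le_add_right h1 2) (le_of_eq ?_)
  ring


theorem stmt18 (n m : ℕ) (hn : 6 ≤ n) (hm : 6 ≤ m) (h1 : m % 4 = 2) (h2 : n % 4 = 2) :
    pairedDomNum (torusGraph n m) ≤ (n + 2) * (m + 2) / 4 - 6 := by
  obtain ⟨a, ha, rfl⟩ : ∃ a, 1 ≤ a ∧ n = 4*a+2 := ⟨(n-2)/4, by omega, by omega⟩
  obtain ⟨b, hb, rfl⟩ : ∃ b, 1 ≤ b ∧ m = 4*b+2 := ⟨(m-2)/4, by omega, by omega⟩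
  haveI : NeZero (4*a+2) := ⟨by omega⟩
  haveI : NeZero (4*b+2) := ⟨by omega⟩
  have hdom : IsDomSet (torusGraph (4*a+2) (4*b+2)) (↑(pat a b) : Set _) := by
    intro v _
    have hv' : vtx a b v.1.val v.2.val = v := by
      unfold vtx
      rw [ZMod.natCast_val, ZMod.cast_id, ZMod.natCast_val, ZMod.cast_id]
    obtain ⟨u, hu, hadj⟩ := pat_dom ha hb (ZMod.val_lt v.1) (ZMod.val_lt v.2)
    rw [hv'] at hadj
    exact ⟨u, Finset.mem_coe.mpr hu, hadj⟩
  have hmatch : ∃ M : ((torusGraph (4*a+2) (4*b+2)).induce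
      (↑(pat a b) : Set _)).Subgraph, M.IsPerfectMatching := by
    refine ⟨⟨Set.univ,
      fun u w => (w : ZMod (4*a+2) × ZMod (4*b+2)) = partner a b ↑u ∨
        (u : ZMod (4*a+2) × ZMod (4*b+2)) = partner a b ↑w, ?_, ?_, ?_⟩,
      ?_, fun v => Set.mem_univ v⟩
    · intro u w h
      show (torusGraph (4*a+2) (4*b+2)).Adj ↑u ↑w
      rcases h with h | h
      · rw [h]; exact partner_adj _
      · have h2 := partner_adj (a := a) (b := b) ↑w
        rw [← h] at h2
        exact h2.symm
    · intro u w _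
      exact Set.mem_univ u
    · constructor
      intro u w h
      exact Or.symm h
    · intro v _
      refine ⟨⟨partner a b ↑v,
        Finset.mem_coe.mpr (partner_mem ha hb (Finset.mem_coe.mp v.2))⟩,
        Or.inl rfl, ?_⟩
      rintro w (hw | hw)
      · exact Subtype.ext hw
      · apply Subtype.ext
        have := congrArg (partner a b) hw
        rw [partner_invol] at this
        exact this.symm
  have hmem : (pat a b).card ∈ {k | ∃ D : Set (ZMod (4*a+2) × ZMod (4*b+2)),
      IsPairedDomSet (torusGraph (4*a+2) (4*b+2)) D ∧ D.ncard = k} :=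
    ⟨↑(pat a b), ⟨hdom, hmatch⟩, Set.ncard_coe_finset _⟩
  have hle : pairedDomNum (torusGraph (4*a+2) (4*b+2)) ≤ (pat a b).card :=
    Nat.sInf_le hmem
  have hcard := pat_card ha hb
  have hbnd : (4*a+2+2)*(4*b+2+2)/4 - 6 = 4*(a*b)+4*a+4*b-2 := by
    have e : (4*a+2+2)*(4*b+2+2) = 4*(4*(a*b)+4*a+4*b+4) := by ring
    rw [e, Nat.mul_div_cancel_left _ (by norm_num : 0 < 4)]
    obtain ⟨s, hs⟩ : ∃ s, a*b = s := ⟨_, rfl⟩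
    rw [hs]
    omega
  rw [hbnd]
  obtain ⟨s, hs⟩ : ∃ s, a*b = s := ⟨_, rfl⟩
  rw [hs] at hcard ⊢
  omega
end
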